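/- arXiv:1812.06324 — 6 statements merged into one kernel-verified Lean document; each statement's English description precedes it below -/
import Mathlib

section
/- Let n be a positive odd integer. Then, as polynomials in q, the q-shifted factorial product (q^{1-n};q^2)_{(n-1)/2} * (q^{1+n};q^2)_{(n-1)/2} is congruent to ((q;q^2)_{(n-1)/2})^2 modulo Phi_n(q)^2, where Phi_n is the n-th cyclotomic polynomial. -/
open Finset Polynomial

/-- The `q`-shifted factorial `(a;q)_k`. -/
noncomputable def qp {F : Type*} [Field F] (a q : F) (k : ℕ) : F :=
  ∏ j ∈ Finset.range k, (1 - a * q ^ j)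

/-- The `q`-integer `[m]` as a rational function. -/
noncomputable def qint (m : ℕ) : RatFunc ℚ :=
  ∑ i ∈ Finset.range m, RatFunc.X ^ i

/-- The `q`-integer `[m]` as a polynomial. -/
noncomputable def qnat (m : ℕ) : Polynomial ℚ :=
  ∑ i ∈ Finset.range m, Polynomial.X ^ i

/-- The `q`-binomial coefficient as a rational function. -/
noncomputable def qbin (n k : ℕ) : RatFunc ℚ :=
  qp RatFunc.X RatFunc.X n / (qp RatFunc.X RatFunc.X k * qp RatFunc.X RatFunc.X (n - k))

lemma prod_range_sub_prod_range_dvd {R : Type*} [CommRing R] (D : R) (f g : ℕ → R) (m : ℕ)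
    (h : ∀ j < m, D ∣ f j - g j) :
    D ∣ (∏ j ∈ Finset.range m, f j) - ∏ j ∈ Finset.range m, g j := by
  induction m with
  | zero => simp
  | succ m ih =>
    rw [Finset.prod_range_succ, Finset.prod_range_succ]
    have h1 : D ∣ (∏ j ∈ Finset.range m, f j) - ∏ j ∈ Finset.range m, g j :=
      ih fun j hj => h j (Nat.lt_succ_of_lt hj)
    have h2 : D ∣ f m - g m := h m (Nat.lt_succ_self m)
    have : (∏ j ∈ Finset.range m, f j) * f m - (∏ j ∈ Finset.range m, g j) * g m
        = ((∏ j ∈ Finset.range m, f j) - ∏ j ∈ Finset.range m, g j) * f m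
          + (∏ j ∈ Finset.range m, g j) * (f m - g m) := by ring
    rw [this]
    exact dvd_add (Dvd.dvd.mul_right h1 _) (Dvd.dvd.mul_left h2 _)

lemma cyclo_coprime_X (n : ℕ) (hn : 0 < n) : IsCoprime (cyclotomic n ℚ) (X : Polynomial ℚ) := by
  have hc : (cyclotomic n ℚ).coeff 0 ≠ 0 := by
    rcases eq_or_lt_of_le (show 1 ≤ n from hn) with h | h
    · rw [← h]; simp [cyclotomic_one]
    · rw [cyclotomic_coeff_zero _ h]; norm_num
  set c := (cyclotomic n ℚ).coeff 0 with hcdef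
  obtain ⟨Qp, hQ⟩ : (X : Polynomial ℚ) ∣ (cyclotomic n ℚ - C c) := by
    rw [X_dvd_iff]; simp [hcdef]
  have hone : C c⁻¹ * C c = (1 : Polynomial ℚ) := by
    rw [← C_mul, inv_mul_cancel₀ hc, C_1]
  exact ⟨C c⁻¹, -(C c⁻¹ * Qp), by linear_combination (C c⁻¹) * hQ + hone⟩

/-- for odd `n`,
    `(q^{1-n};q^2)_{(n-1)/2} (q^{1+n};q^2)_{(n-1)/2} ≡ (q;q^2)_{(n-1)/2}^2 mod Φ_n(q)^2`. -/
theorem stmt1 (n : ℕ) (hn : 0 < n) (hodd : Odd n) :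
    (Polynomial.cyclotomic n ℚ) ^ 2 ∣
      (qp (RatFunc.X ^ ((1 : ℤ) - (n : ℤ))) (RatFunc.X ^ 2) ((n - 1) / 2) *
        qp (RatFunc.X ^ (1 + n)) (RatFunc.X ^ 2) ((n - 1) / 2) -
        (qp RatFunc.X (RatFunc.X ^ 2) ((n - 1) / 2)) ^ 2).num := by
  obtain ⟨m, hm⟩ := hodd
  have hm2 : (n - 1) / 2 = m := by omega
  set k := 2 * m with hkdef
  have hnk : n = k + 1 := by omega
  set φ := algebraMap (Polynomial ℚ) (RatFunc ℚ) with hφ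
  set r : RatFunc ℚ :=
      qp (RatFunc.X ^ ((1 : ℤ) - (n : ℤ))) (RatFunc.X ^ 2) ((n - 1) / 2) *
        qp (RatFunc.X ^ (1 + n)) (RatFunc.X ^ 2) ((n - 1) / 2) -
        (qp RatFunc.X (RatFunc.X ^ 2) ((n - 1) / 2)) ^ 2 with hr
  set Ap : Polynomial ℚ := ∏ j ∈ Finset.range m, ((X : Polynomial ℚ) ^ k - (X ^ 2) ^ j) with hAp
  set A'p : Polynomial ℚ := ∏ j ∈ Finset.range m, (1 - (X : Polynomial ℚ) ^ (1 + n) * (X ^ 2) ^ j) with hA'p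
  set Bp : Polynomial ℚ := (∏ j ∈ Finset.range m, (1 - (X : Polynomial ℚ) * (X ^ 2) ^ j)) ^ 2 with hBp
  set Q : Polynomial ℚ := Ap * A'p - X ^ (k * m) * Bp with hQ
  have hXne : (RatFunc.X : RatFunc ℚ) ≠ 0 := RatFunc.X_ne_zero
  -- step A
  have hz : (RatFunc.X : RatFunc ℚ) ^ k * RatFunc.X ^ ((1 : ℤ) - (n : ℤ)) = 1 := by
    rw [← zpow_natCast (RatFunc.X : RatFunc ℚ) k, ← zpow_add₀ hXne]
    have he : (k : ℤ) + ((1 : ℤ) - (n : ℤ)) = 0 := by omega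
    rw [he, zpow_zero]
  have factor : ∀ j : ℕ,
      φ ((X : Polynomial ℚ) ^ k) * (1 - RatFunc.X ^ ((1 : ℤ) - (n : ℤ)) * (RatFunc.X ^ 2) ^ j)
        = φ ((X : Polynomial ℚ) ^ k - (X ^ 2) ^ j) := by
    intro j
    simp only [hφ, map_sub, map_pow, map_one, map_mul, RatFunc.algebraMap_X]
    linear_combination (-(RatFunc.X ^ 2 : RatFunc ℚ) ^ j) * hz
  have stepA : φ ((X : Polynomial ℚ) ^ (k * m)) *
      qp (RatFunc.X ^ ((1 : ℤ) - (n : ℤ))) (RatFunc.X ^ 2) ((n - 1) / 2) = φ Ap := by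
    rw [hm2, qp, hAp, map_prod]
    calc φ ((X : Polynomial ℚ) ^ (k * m)) *
          ∏ j ∈ Finset.range m, (1 - RatFunc.X ^ ((1 : ℤ) - (n : ℤ)) * (RatFunc.X ^ 2) ^ j)
        = ∏ j ∈ Finset.range m,
            (φ ((X : Polynomial ℚ) ^ k) * (1 - RatFunc.X ^ ((1 : ℤ) - (n : ℤ)) * (RatFunc.X ^ 2) ^ j)) := by
          rw [Finset.prod_mul_distrib, Finset.prod_const, Finset.card_range, ← map_pow, ← pow_mul]
      _ = ∏ j ∈ Finset.range m, φ ((X : Polynomial ℚ) ^ k - (X ^ 2) ^ j) :=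
          Finset.prod_congr rfl fun j _ => factor j
  have stepA' : qp (RatFunc.X ^ (1 + n)) (RatFunc.X ^ 2) ((n - 1) / 2) = φ A'p := by
    rw [hm2, qp, hA'p, map_prod]
    refine Finset.prod_congr rfl fun j _ => ?_
    simp [hφ, RatFunc.algebraMap_X]
  have stepB : (qp RatFunc.X (RatFunc.X ^ 2) ((n - 1) / 2)) ^ 2 = φ Bp := by
    rw [hm2, qp, hBp, map_pow, map_prod]
    congr 1
    refine Finset.prod_congr rfl fun j _ => ?_
    simp [hφ, RatFunc.algebraMap_X]
  -- main equation
  have key : φ ((X : Polynomial ℚ) ^ (k * m)) * r = φ Q := by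
    rw [hr, hQ, map_sub, map_mul, mul_sub, ← mul_assoc, stepA, stepA', stepB, ← map_mul, ← map_mul]
  -- divisibility of Q
  have hdvdQ : (cyclotomic n ℚ) ^ 2 ∣ Q := by
    have h1 : cyclotomic n ℚ ∣ (X : Polynomial ℚ) ^ n - 1 := cyclotomic.dvd_X_pow_sub_one n ℚ
    have h2 : (cyclotomic n ℚ) ^ 2 ∣ ((X : Polynomial ℚ) ^ n - 1) ^ 2 := pow_dvd_pow_of_dvd h1 2
    have haux : ∏ j ∈ Finset.range m, ((X : Polynomial ℚ) ^ k * (1 - X * (X ^ 2) ^ j) ^ 2)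
        = X ^ (k * m) * Bp := by
      rw [hBp, Finset.prod_mul_distrib, Finset.prod_const, Finset.card_range, ← pow_mul,
        Finset.prod_pow]
    have hQeq : Q = (∏ j ∈ Finset.range m, (((X : Polynomial ℚ) ^ k - (X ^ 2) ^ j) * (1 - X ^ (1 + n) * (X ^ 2) ^ j)))
        - ∏ j ∈ Finset.range m, ((X : Polynomial ℚ) ^ k * (1 - X * (X ^ 2) ^ j) ^ 2) := by
      rw [hQ, hAp, hA'p, haux, ← Finset.prod_mul_distrib]
    rw [hQeq]
    refine dvd_trans h2 (prod_range_sub_prod_range_dvd _ _ _ m fun j _ => ⟨-(X ^ 2) ^ j, ?_⟩)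
    subst hnk
    ring
  -- extract num
  have hnum : r.num * X ^ (k * m) = Q * r.denom := by
    apply RatFunc.algebraMap_injective ℚ
    have hd : φ r.denom ≠ 0 := RatFunc.algebraMap_ne_zero (r.denom_ne_zero)
    have hnd := RatFunc.num_div_denom r
    rw [div_eq_iff hd] at hnd
    show φ _ = φ _
    rw [map_mul, map_mul, hnd]
    linear_combination (φ r.denom) * key
  have hfinal : (cyclotomic n ℚ) ^ 2 ∣ r.num * X ^ (k * m) := hnum ▸ hdvdQ.mul_right _
  exact ((cyclo_coprime_X n hn).pow).dvd_of_dvd_mul_right hfinal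
end

section
/- Let n be a positive odd integer and let 0 <= k <= (n-1)/2. Then the rational function (aq;q^2)_{(n-1)/2-k} / (q^2/a;q^2)_{(n-1)/2-k} is congruent to (-a)^{(n-1)/2-2k} * ((aq;q^2)_k / (q^2/a;q^2)_k) * q^{(n-1)^2/4 + k} modulo Phi_n(q), i.e., the numerator of the difference (as a reduced rational function in a and q) is divisible by Phi_n(q) in Z[a,q]. -/
open Finset Polynomial

namespace S2

lemma isCoprime_of_isUnit_right {R : Type*} [CommSemiring R] {x y : R} (h : IsUnit y) :
    IsCoprime x y := by
  obtain ⟨u, rfl⟩ := h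
  exact ⟨0, ↑u⁻¹, by simp⟩

lemma cop {F : Type*} [Field F] {c : F} {n : ℕ} (h : c ^ n ≠ 1) (s : ℕ) :
    IsCoprime ((X : F[X]) ^ n - 1) (Polynomial.C c - X ^ s) := by
  classical
  by_contra hcon
  rw [← EuclideanDomain.gcd_isUnit_iff] at hcon
  set g := EuclideanDomain.gcd ((X : F[X]) ^ n - 1) (Polynomial.C c - X ^ s) with hg
  have h1 : g ∣ (X : F[X]) ^ n - 1 := EuclideanDomain.gcd_dvd_left _ _
  have h2 : g ∣ Polynomial.C c - X ^ s := EuclideanDomain.gcd_dvd_right _ _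
  set mk := Ideal.Quotient.mk (Ideal.span {g}) with hmk
  have e1 : mk ((X : F[X]) ^ n - 1) = 0 := by
    rw [hmk, Ideal.Quotient.eq_zero_iff_mem, Ideal.mem_span_singleton]; exact h1
  have e2 : mk (Polynomial.C c - X ^ s) = 0 := by
    rw [hmk, Ideal.Quotient.eq_zero_iff_mem, Ideal.mem_span_singleton]; exact h2
  rw [map_sub, map_pow, map_one, sub_eq_zero] at e1
  rw [map_sub, map_pow, sub_eq_zero] at e2
  have e3 : mk (Polynomial.C (c ^ n - 1)) = 0 := by
    have hC : (Polynomial.C (c ^ n - 1) : F[X]) = (Polynomial.C c) ^ n - 1 := by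
      rw [map_sub, map_pow, map_one]
    rw [hC, map_sub, map_pow, map_one, e2, ← pow_mul, mul_comm s n, pow_mul, e1, one_pow,
      sub_self]
  have hdvd : g ∣ Polynomial.C (c ^ n - 1) := by
    rw [← Ideal.mem_span_singleton, ← Ideal.Quotient.eq_zero_iff_mem, ← hmk]; exact e3
  exact hcon (isUnit_of_dvd_unit hdvd
    (Polynomial.isUnit_C.mpr (isUnit_iff_ne_zero.mpr (sub_ne_zero.mpr h))))

abbrev Fq := RatFunc ℚ

noncomputable def pA (t : ℕ) : Polynomial Fq :=
  ∏ j ∈ Finset.range t, (1 - Polynomial.C RatFunc.X * X ^ (2*j+1))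

noncomputable def pB (t : ℕ) : Polynomial Fq :=
  ∏ j ∈ Finset.range t, (Polynomial.C RatFunc.X - X ^ (2*j+2))

lemma sum_odd (t : ℕ) : ∑ j ∈ Finset.range t, (2*j+1) = t^2 := by
  induction t with
  | zero => simp
  | succ n ih => rw [Finset.sum_range_succ, ih]; ring

set_option maxHeartbeats 1000000 in
set_option maxRecDepth 8000 in
lemma dvd_main (k d : ℕ) :
    ((X : Polynomial Fq) ^ (2*(k+d)+1) - 1) ∣
      (pA d * pB k * Polynomial.C (RatFunc.X ^ d * (-RatFunc.X) ^ k)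
        - pA k * pB d * (Polynomial.C ((-RatFunc.X) ^ d * RatFunc.X ^ k) * X ^ ((k+d)^2+k))) := by
  classical
  rw [← Ideal.mem_span_singleton, ← Ideal.Quotient.eq_zero_iff_mem]
  set mk := Ideal.Quotient.mk (Ideal.span {(X : Polynomial Fq) ^ (2*(k+d)+1) - 1}) with hmk
  set x := mk X with hxdef
  set al := mk (Polynomial.C RatFunc.X) with haldef
  have hx : x ^ (2*(k+d)+1) = 1 := by
    have h0 : mk ((X : Polynomial Fq) ^ (2*(k+d)+1) - 1) = 0 := by
      rw [hmk, Ideal.Quotient.eq_zero_iff_mem]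
      exact Ideal.subset_span (Set.mem_singleton _)
    rwa [map_sub, map_pow, map_one, sub_eq_zero] at h0
  have hA : ∀ t, t ≤ k + d →
      mk (pA t) = (-1) ^ t * x ^ (t^2) *
        ∏ j ∈ Finset.range t, (al - x ^ (2*((k+d) - j))) := by
    intro t ht
    rw [pA, map_prod]
    have step : ∀ j ∈ Finset.range t,
        mk (1 - Polynomial.C RatFunc.X * X ^ (2*j+1))
          = ((-1) * x ^ (2*j+1)) * (al - x ^ (2*((k+d) - j))) := by
      intro j hj
      rw [Finset.mem_range] at hj
      have hxe : x ^ (2*j+1) * x ^ (2*((k+d) - j)) = 1 := by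
        rw [← pow_add, show 2*j+1+2*((k+d)-j) = 2*(k+d)+1 by omega, hx]
      rw [map_sub, map_one, map_mul, map_pow, ← hxdef, ← haldef]
      linear_combination -hxe
    rw [Finset.prod_congr rfl step, Finset.prod_mul_distrib, Finset.prod_mul_distrib,
      Finset.prod_const, Finset.card_range, Finset.prod_pow_eq_pow_sum, sum_odd]
  have hB : ∀ t, mk (pB t) = ∏ j ∈ Finset.range t, (al - x ^ (2*(j+1))) := by
    intro t
    rw [pB, map_prod]
    refine Finset.prod_congr rfl fun j hj => ?_
    rw [map_sub, map_pow, ← hxdef, ← haldef, show 2*j+2 = 2*(j+1) by ring]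
  have hre : ∀ t1 t2, t1 + t2 = k + d →
      (∏ j ∈ Finset.range t1, (al - x ^ (2*((k+d) - j)))) *
        ∏ j ∈ Finset.range t2, (al - x ^ (2*(j+1)))
        = ∏ j ∈ Finset.range (k+d), (al - x ^ (2*(j+1))) := by
    intro t1 t2 hts
    have h1 : (∏ j ∈ Finset.range t1, (al - x ^ (2*((k+d) - j))))
        = ∏ j ∈ Finset.range t1, (al - x ^ (2*((t2 + (t1 - 1 - j)) + 1))) := by
      refine Finset.prod_congr rfl fun j hj => ?_
      rw [Finset.mem_range] at hj
      congr 2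
      omega
    have h2 := Finset.prod_range_reflect (fun j => al - x ^ (2*((t2 + j) + 1))) t1
    have h3 := (Finset.prod_range_add (fun i => al - x ^ (2*(i+1))) t2 t1).symm
    rw [add_comm t2 t1, hts] at h3
    rw [h1, h2, ← h3]
    exact mul_comm _ _
  simp only [map_sub, map_mul, map_pow, map_neg, map_one]
  rw [← hxdef, ← haldef]
  rw [hA d (by omega), hA k (by omega), hB k, hB d]
  have hnk : (-al) ^ k = (-1) ^ k * al ^ k := neg_pow al k
  have hnd : (-al) ^ d = (-1) ^ d * al ^ d := neg_pow al d
  rw [hnk, hnd]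
  have h1 := hre d k (by omega)
  have h2 := hre k d (by omega)
  have hxx : x ^ (k^2) * x ^ ((k+d)^2+k) = x ^ (d^2) := by
    have hone : x ^ ((2*(k+d)+1)*k) = 1 := by rw [pow_mul, hx, one_pow]
    calc x ^ (k^2) * x ^ ((k+d)^2+k) = x ^ (d^2) * x ^ ((2*(k+d)+1)*k) := by
          rw [← pow_add, ← pow_add]; congr 1; ring
      _ = x ^ (d^2) := by rw [hone, mul_one]
  set P := ∏ j ∈ Finset.range (k+d), (al - x ^ (2*(j+1))) with hP
  linear_combination ((-1 : Fq[X] ⧸ Ideal.span {(X : Polynomial Fq) ^ (2*(k+d)+1) - 1}) ^ d *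
      (-1) ^ k * al ^ d * al ^ k * x ^ (d^2)) * h1 -
    ((-1 : Fq[X] ⧸ Ideal.span {(X : Polynomial Fq) ^ (2*(k+d)+1) - 1}) ^ d *
      (-1) ^ k * al ^ d * al ^ k * x ^ (k^2) * x ^ ((k+d)^2+k)) * h2 -
    ((-1 : Fq[X] ⧸ Ideal.span {(X : Polynomial Fq) ^ (2*(k+d)+1) - 1}) ^ d *
      (-1) ^ k * al ^ d * al ^ k * P) * hxx

end S2
namespace S2

lemma qp_A (t : ℕ) :
    qp ((RatFunc.C RatFunc.X : RatFunc Fq) * RatFunc.X) (RatFunc.X ^ 2) t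
      = algebraMap (Polynomial Fq) (RatFunc Fq) (pA t) := by
  rw [qp, pA, map_prod]
  refine Finset.prod_congr rfl fun j hj => ?_
  rw [map_sub, map_one, map_mul, map_pow, RatFunc.algebraMap_C, RatFunc.algebraMap_X]
  ring

lemma pB_ne_zero (t : ℕ) : pB t ≠ 0 := by
  rw [pB]
  refine Finset.prod_ne_zero_iff.mpr fun j hj hzero => ?_
  have h0 := congrArg (Polynomial.eval 0) hzero
  simp [zero_pow] at h0
  exact RatFunc.X_ne_zero h0

lemma haC : (RatFunc.C (RatFunc.X : Fq) : RatFunc Fq) ≠ 0 := by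
  rw [← RatFunc.algebraMap_C]
  exact RatFunc.algebraMap_ne_zero (Polynomial.C_ne_zero.mpr RatFunc.X_ne_zero)

lemma qp_B (t : ℕ) :
    qp ((RatFunc.X : RatFunc Fq) ^ 2 / RatFunc.C (RatFunc.X : Fq)) (RatFunc.X ^ 2) t *
      (RatFunc.C (RatFunc.X : Fq) : RatFunc Fq) ^ t
      = algebraMap (Polynomial Fq) (RatFunc Fq) (pB t) := by
  rw [qp, pB, map_prod,
    show ((RatFunc.C (RatFunc.X : Fq) : RatFunc Fq)) ^ t
      = ∏ _j ∈ Finset.range t, (RatFunc.C (RatFunc.X : Fq) : RatFunc Fq) by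
        rw [Finset.prod_const, Finset.card_range],
    ← Finset.prod_mul_distrib]
  refine Finset.prod_congr rfl fun j hj => ?_
  rw [map_sub, map_pow, RatFunc.algebraMap_C, RatFunc.algebraMap_X]
  field_simp [haC]
  linear_combination (-((RatFunc.X : RatFunc Fq) ^ 2 * RatFunc.X ^ (j * 2))) * mul_inv_cancel₀ haC

lemma X_pow_ne_one (n : ℕ) (hn : 0 < n) : (RatFunc.X : Fq) ^ n ≠ 1 := by
  intro h
  have h1 : algebraMap (Polynomial ℚ) (RatFunc ℚ) (X ^ n) = algebraMap (Polynomial ℚ) (RatFunc ℚ) 1 := by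
    rwa [map_pow, map_one, RatFunc.algebraMap_X]
  have h3 := RatFunc.algebraMap_injective ℚ h1
  have h4 := congrArg Polynomial.natDegree h3
  simp [Polynomial.natDegree_X_pow] at h4
  omega

end S2

open S2

set_option maxHeartbeats 1000000

/-- Lemma 2.1 of the paper, a congruence mod `Φ_n(q)` for rational
functions in the extra parameter `a` (the inner indeterminate) and `q`. -/
theorem stmt2 (n : ℕ) (hn : 0 < n) (hodd : Odd n) (k : ℕ) (hk : k ≤ (n - 1) / 2) :
    letI a : RatFunc (RatFunc ℚ) := RatFunc.C RatFunc.X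
    letI q : RatFunc (RatFunc ℚ) := RatFunc.X
    Polynomial.cyclotomic n (RatFunc ℚ) ∣
      (qp (a * q) (q ^ 2) ((n - 1) / 2 - k) / qp (q ^ 2 / a) (q ^ 2) ((n - 1) / 2 - k) -
        (-a) ^ (((n : ℤ) - 1) / 2 - 2 * (k : ℤ)) *
          (qp (a * q) (q ^ 2) k / qp (q ^ 2 / a) (q ^ 2) k) *
          q ^ ((n - 1) ^ 2 / 4 + k)).num := by
  obtain ⟨m, rfl⟩ := hodd
  have hk' : k ≤ m := by omega
  obtain ⟨d, rfl⟩ : ∃ d, m = k + d := ⟨m - k, by omega⟩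
  rw [show (2*(k+d)+1-1)/2 - k = d by omega]
  rw [show (((2*(k+d)+1 : ℕ) : ℤ) - 1) / 2 - 2 * (k : ℤ) = (d : ℤ) - (k : ℤ) by push_cast; omega]
  rw [show (2*(k+d)+1-1)^2/4 + k = (k+d)^2 + k by
    congr 1
    rw [Nat.add_sub_cancel, show (2*(k+d))^2 = (k+d)^2 * 4 by ring]
    exact Nat.mul_div_cancel _ (by norm_num)]
  have ha : (RatFunc.C (RatFunc.X : Fq) : RatFunc Fq) ≠ 0 := haC
  have hna : -(RatFunc.C (RatFunc.X : Fq) : RatFunc Fq) ≠ 0 := neg_ne_zero.mpr ha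
  have hzp : (-(RatFunc.C (RatFunc.X : Fq) : RatFunc Fq)) ^ ((d : ℤ) - (k : ℤ))
      = (-(RatFunc.C (RatFunc.X : Fq) : RatFunc Fq)) ^ d /
        (-(RatFunc.C (RatFunc.X : Fq) : RatFunc Fq)) ^ k := by
    rw [zpow_sub₀ hna, zpow_natCast, zpow_natCast]
  have hBd' : qp ((RatFunc.X : RatFunc Fq) ^ 2 / RatFunc.C (RatFunc.X : Fq)) (RatFunc.X ^ 2) d
      = algebraMap (Polynomial Fq) (RatFunc Fq) (pB d) / (RatFunc.C (RatFunc.X : Fq)) ^ d := by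
    rw [eq_div_iff (pow_ne_zero d ha)]; exact qp_B d
  have hBk' : qp ((RatFunc.X : RatFunc Fq) ^ 2 / RatFunc.C (RatFunc.X : Fq)) (RatFunc.X ^ 2) k
      = algebraMap (Polynomial Fq) (RatFunc Fq) (pB k) / (RatFunc.C (RatFunc.X : Fq)) ^ k := by
    rw [eq_div_iff (pow_ne_zero k ha)]; exact qp_B k
  have hpBd : algebraMap (Polynomial Fq) (RatFunc Fq) (pB d) ≠ 0 :=
    RatFunc.algebraMap_ne_zero (pB_ne_zero d)
  have hpBk : algebraMap (Polynomial Fq) (RatFunc Fq) (pB k) ≠ 0 :=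
    RatFunc.algebraMap_ne_zero (pB_ne_zero k)
  set N : Polynomial Fq := pA d * pB k * Polynomial.C (RatFunc.X ^ d * (-RatFunc.X) ^ k)
    - pA k * pB d * (Polynomial.C ((-RatFunc.X) ^ d * RatFunc.X ^ k) * X ^ ((k+d)^2+k)) with hN
  set D : Polynomial Fq := pB d * pB k * Polynomial.C ((-RatFunc.X) ^ k) with hD
  set E : RatFunc Fq :=
    qp ((RatFunc.C (RatFunc.X : Fq) : RatFunc Fq) * RatFunc.X) (RatFunc.X ^ 2) d /
        qp ((RatFunc.X : RatFunc Fq) ^ 2 / RatFunc.C (RatFunc.X : Fq)) (RatFunc.X ^ 2) d -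
      (-(RatFunc.C (RatFunc.X : Fq) : RatFunc Fq)) ^ ((d : ℤ) - (k : ℤ)) *
        (qp ((RatFunc.C (RatFunc.X : Fq) : RatFunc Fq) * RatFunc.X) (RatFunc.X ^ 2) k /
          qp ((RatFunc.X : RatFunc Fq) ^ 2 / RatFunc.C (RatFunc.X : Fq)) (RatFunc.X ^ 2) k) *
        RatFunc.X ^ ((k+d)^2+k) with hE
  have key : E * algebraMap (Polynomial Fq) (RatFunc Fq) D
      = algebraMap (Polynomial Fq) (RatFunc Fq) N := by
    rw [hE, hD, hN, hzp, qp_A d, qp_A k, hBd', hBk']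
    simp only [map_sub, map_mul, map_pow, map_neg, RatFunc.algebraMap_C, RatFunc.algebraMap_X]
    field_simp
  have hnd : algebraMap (Polynomial Fq) (RatFunc Fq) E.num
      = E * algebraMap (Polynomial Fq) (RatFunc Fq) E.denom := by
    have h := RatFunc.num_div_denom E
    rwa [div_eq_iff (RatFunc.algebraMap_ne_zero (E.denom_ne_zero))] at h
  have hnum : E.num * D = N * E.denom := by
    apply RatFunc.algebraMap_injective Fq
    rw [map_mul (algebraMap (Polynomial Fq) (RatFunc Fq)) E.num D,
      map_mul (algebraMap (Polynomial Fq) (RatFunc Fq)) N E.denom, hnd, mul_right_comm, key]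
  have hdvdN : Polynomial.cyclotomic (2*(k+d)+1) Fq ∣ N :=
    dvd_trans (Polynomial.cyclotomic.dvd_X_pow_sub_one _ _) (dvd_main k d)
  have hXn : (RatFunc.X : Fq) ^ (2*(k+d)+1) ≠ 1 := X_pow_ne_one _ (by omega)
  have hcop : IsCoprime (Polynomial.cyclotomic (2*(k+d)+1) Fq) D := by
    rw [hD]
    refine IsCoprime.mul_right (IsCoprime.mul_right ?_ ?_) (isCoprime_of_isUnit_right ?_)
    · rw [pB]
      exact IsCoprime.prod_right fun j hj =>
        (cop hXn (2*j+2)).of_isCoprime_of_dvd_left (Polynomial.cyclotomic.dvd_X_pow_sub_one _ _)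
    · rw [pB]
      exact IsCoprime.prod_right fun j hj =>
        (cop hXn (2*j+2)).of_isCoprime_of_dvd_left (Polynomial.cyclotomic.dvd_X_pow_sub_one _ _)
    · exact Polynomial.isUnit_C.mpr (isUnit_iff_ne_zero.mpr
        (pow_ne_zero _ (neg_ne_zero.mpr RatFunc.X_ne_zero)))
  have hdd : Polynomial.cyclotomic (2*(k+d)+1) Fq ∣ E.num * D := by
    rw [hnum]; exact hdvdN.mul_right _
  exact hcop.dvd_of_dvd_mul_right hdd
end

section
/- For any odd prime p, sum_{k=0}^{(p-1)/2} (4k+1) * (-1/2)_k (1/2)_k^3 / ((k+1)! * k!^3) ≡ 2 p^3 (mod p^4), where (a)_k = a(a+1)...(a+k-1) is the Pochhammer symbol. -/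
open Finset

/-- The rising factorial (Pochhammer symbol) of a rational number. -/
noncomputable def poch (a : ℚ) (k : ℕ) : ℚ :=
  ∏ j ∈ Finset.range k, (a + j)

lemma poch_succ (a : ℚ) (k : ℕ) : poch a (k+1) = poch a k * (a + k) := by
  simp [poch, Finset.prod_range_succ]

lemma poch_succ' (a : ℚ) (k : ℕ) : poch a (k+1) = a * poch (a+1) k := by
  rw [poch, Finset.prod_range_succ']
  simp [poch, mul_comm, add_assoc, add_comm (1:ℚ)]

lemma closed (N : ℕ) :
    ∑ k ∈ Finset.range (N+1),
        (4 * (k : ℚ) + 1) * poch (-1/2) k * (poch (1/2) k) ^ 3 /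
          ((Nat.factorial (k + 1) : ℚ) * (Nat.factorial k : ℚ) ^ 3)
    = 8 * poch (1/2) N * (poch (1/2) (N+1))^3 /
        ((Nat.factorial (N+1) : ℚ) * (Nat.factorial N : ℚ)^3) := by
  induction N with
  | zero => simp [poch, poch_succ]; norm_num
  | succ n ih =>
      rw [Finset.sum_range_succ, ih, poch_succ' (-1/2) n]
      have hfz : ∀ m : ℕ, (Nat.factorial m : ℚ) ≠ 0 := fun m => by
        exact_mod_cast (Nat.factorial_pos m).ne'
      rw [poch_succ (1/2) (n+1), poch_succ (1/2) n,
        Nat.factorial_succ (n+1), Nat.factorial_succ n]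
      have h : ((-1:ℚ)/2 + 1) = 1/2 := by norm_num
      rw [h]
      field_simp
      push_cast
      ring

lemma poch_half (k : ℕ) :
    poch (1/2) k = (Nat.factorial (2*k) : ℚ) / (4^k * (Nat.factorial k : ℚ)) := by
  induction k with
  | zero => simp [poch]
  | succ n ih =>
      rw [poch_succ, ih]
      have h2 : 2*(n+1) = 2*n + 1 + 1 := by ring
      rw [h2, Nat.factorial_succ, Nat.factorial_succ, Nat.factorial_succ]
      have hfz : (Nat.factorial n : ℚ) ≠ 0 := by
        exact_mod_cast (Nat.factorial_pos n).ne'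
      have h4 : (4:ℚ)^n ≠ 0 := by positivity
      field_simp
      push_cast
      ring

lemma choose_mod (p : ℕ) (hp : p.Prime) : ∀ k, k ≤ p - 1 →
    (((p-1).choose k : ZMod p)) = (-1)^k := by
  intro k
  induction k with
  | zero => simp
  | succ n ih =>
      intro hn
      have hn' : n ≤ p - 1 := Nat.le_of_succ_le hn
      have hpos : 0 < p := hp.pos
      have hpascal : (p-1).choose n + (p-1).choose (n+1) = p.choose (n+1) := by
        rw [← Nat.choose_succ_succ]
        congr 1
        omega
      have hdvd : p ∣ p.choose (n+1) := hp.dvd_choose_self (Nat.succ_ne_zero n) (by omega)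
      have h0 : ((p.choose (n+1) : ZMod p)) = 0 := by
        exact_mod_cast (ZMod.natCast_eq_zero_iff _ _).mpr hdvd
      have h2 : ((p-1).choose n : ZMod p) + ((p-1).choose (n+1) : ZMod p) = 0 := by
        rw [← Nat.cast_add, hpascal, h0]
      rw [ih hn'] at h2
      have h3 : ((p-1).choose (n+1) : ZMod p) = -(-1)^n := by linear_combination h2
      rw [h3]; ring

/-- for any odd prime `p`,
`∑_{k=0}^{(p-1)/2} (4k+1) (-1/2)_k (1/2)_k^3 / ((k+1)! k!^3) ≡ 2p^3 (mod p^4)`. -/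
theorem stmt8 (p : ℕ) (hp : p.Prime) (hodd : p ≠ 2) :
    ∃ a b : ℤ, ¬ (p : ℤ) ∣ b ∧
      (∑ k ∈ Finset.range ((p - 1) / 2 + 1),
          (4 * (k : ℚ) + 1) * poch (-1/2) k * (poch (1/2) k) ^ 3 /
            ((Nat.factorial (k + 1) : ℚ) * (Nat.factorial k : ℚ) ^ 3))
        - 2 * (p : ℚ) ^ 3 = (p : ℚ) ^ 4 * (a : ℚ) / (b : ℚ) := by
  haveI : Fact p.Prime := ⟨hp⟩
  set N : ℕ := (p - 1) / 2 with hNdef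
  have hpodd : Odd p := hp.odd_of_ne_two hodd
  have hN : p = 2 * N + 1 := by
    obtain ⟨m, hm⟩ := hpodd
    omega
  set C : ℕ := (2*N).choose N with hCdef
  -- divisibility
  have hCmod : ((C : ZMod p)) = (-1)^N := by
    have h1 : 2*N = p - 1 := by omega
    have := choose_mod p hp N (by omega)
    rw [← h1] at this
    exact this
  have h2ne : (2 : ZMod p) ≠ 0 := by
    intro h
    have hd : p ∣ 2 := (ZMod.natCast_eq_zero_iff 2 p).mp (by exact_mod_cast h)
    exact hodd ((Nat.prime_dvd_prime_iff_eq hp Nat.prime_two).mp hd)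
  have h4mod : ((4 : ZMod p))^(4*N) = 1 := by
    have h4 : (4 : ZMod p) = 2^2 := by norm_num
    rw [h4, ← pow_mul]
    have : 2 * (4*N) = (p-1) * 4 := by omega
    rw [this, pow_mul, ZMod.pow_card_sub_one_eq_one h2ne]
    norm_num
  set D : ℤ := (C:ℤ)^4 - 4^(4*N) * (p+1) with hDdef
  have hpD : (p:ℤ) ∣ D := by
    have : ((D : ZMod p)) = 0 := by
      push_cast [hDdef]
      rw [hCmod, h4mod]
      have hp1 : ((p : ZMod p)) = 0 := by exact_mod_cast ZMod.natCast_self p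
      rw [hp1, ← pow_mul]
      rw [(by ring : N*4 = 2*(N*2)), pow_mul]
      norm_num
    exact_mod_cast (ZMod.intCast_zmod_eq_zero_iff_dvd D p).mp this
  obtain ⟨E, hE⟩ := hpD
  refine ⟨2 * E, 4^(4*N) * (p+1), ?_, ?_⟩
  · intro hdvd
    have hpZ : Prime ((p:ℤ)) := Nat.prime_iff_prime_int.mp hp
    rcases (hpZ.dvd_mul.mp hdvd) with h | h
    · have h4 : (p:ℤ) ∣ 4 := hpZ.dvd_of_dvd_pow h
      have hd : p ∣ 2^2 := by exact_mod_cast (by norm_num : (4:ℤ) = 2^2) ▸ h4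
      have hd2 : p ∣ 2 := hp.dvd_of_dvd_pow hd
      exact hodd ((Nat.prime_dvd_prime_iff_eq hp Nat.prime_two).mp hd2)
    · have h1 : (p:ℤ) ∣ 1 := (dvd_add_right (dvd_refl _)).mp h
      have h2 : (p:ℤ) ≤ 1 := Int.le_of_dvd one_pos h1
      have h3 : 2 ≤ p := hp.two_le
      omega
  · rw [closed N, poch_half N, poch_half (N+1)]
    -- cast facts
    have hx : (Nat.factorial N : ℚ) ≠ 0 := by
      exact_mod_cast (Nat.factorial_pos N).ne'
    have hCfac : ((Nat.factorial (2*N)):ℚ) = C * (Nat.factorial N : ℚ)^2 := by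
      have h := Nat.choose_mul_factorial_mul_factorial (by omega : N ≤ 2*N)
      have h2 : 2*N - N = N := by omega
      rw [h2] at h
      push_cast [← h]
      ring
    have hfac1 : ((Nat.factorial (N+1)):ℚ) = ((N:ℚ)+1) * (Nat.factorial N : ℚ) := by
      rw [Nat.factorial_succ]; push_cast; ring
    have hfac2 : ((Nat.factorial (2*(N+1))):ℚ)
        = (2*(N:ℚ)+2) * (2*(N:ℚ)+1) * ((Nat.factorial (2*N)):ℚ) := by
      have h2 : 2*(N+1) = (2*N+1)+1 := by ring
      rw [h2, Nat.factorial_succ, Nat.factorial_succ]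
      push_cast
      ring
    have hpQ : (p : ℚ) = 2*(N:ℚ)+1 := by exact_mod_cast congrArg (Nat.cast : ℕ → ℚ) hN
    have hEQ : (E : ℚ) = ((C:ℚ)^4 - 4^(4*N) * (2*(N:ℚ)+2)) / (2*(N:ℚ)+1) := by
      rw [hDdef] at hE
      have h := congrArg (Int.cast : ℤ → ℚ) hE
      push_cast at h
      rw [hpQ] at h
      have hden : (2*(N:ℚ)+1) ≠ 0 := by positivity
      field_simp
      linarith [h]
    rw [hfac2, hCfac, hfac1]
    push_cast
    rw [hpQ, hEQ]
    have h1 : (2*(N:ℚ)+1) ≠ 0 := by positivity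
    have h2 : ((N:ℚ)+1) ≠ 0 := by positivity
    have h3 : (4:ℚ)^N ≠ 0 := by positivity
    have h4 : (4:ℚ)^(4*N) ≠ 0 := by positivity
    field_simp
    ring
end

section
/- For every positive integer N with gcd(N+1, 6) = 1, the q-binomial coefficient [4N choose 2N]_q is divisible by [N+1]_q in Z[q]. -/
open Finset Polynomial

/-! ### Auxiliary development -/

/-- `q`-integer over `ℤ`. -/
noncomputable def qnZ (m : ℕ) : Polynomial ℤ := ∑ i ∈ Finset.range m, Polynomial.X ^ i

/-- `q`-factorial over `ℤ`. -/
noncomputable def qfZ (n : ℕ) : Polynomial ℤ := ∏ i ∈ Finset.range n, qnZ (i + 1)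

/-- Gaussian binomial over `ℤ`, via the `q`-Pascal recursion. -/
noncomputable def gbZ : ℕ → ℕ → Polynomial ℤ
  | _, 0 => 1
  | 0, _ + 1 => 0
  | n + 1, k + 1 => gbZ n k + Polynomial.X ^ (k + 1) * gbZ n (k + 1)

lemma gbZ_eq_zero : ∀ n k, n < k → gbZ n k = 0
  | _, 0, h => absurd h (Nat.not_lt_zero _)
  | 0, _ + 1, _ => rfl
  | n + 1, k + 1, h => by
      rw [gbZ, gbZ_eq_zero n k (by omega), gbZ_eq_zero n (k + 1) (by omega)]
      ring

lemma qnZ_add (a b : ℕ) : qnZ (a + b) = qnZ a + Polynomial.X ^ a * qnZ b := by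
  rw [qnZ, qnZ, qnZ, Finset.sum_range_add, Finset.mul_sum]
  congr 1
  exact Finset.sum_congr rfl fun i _ => by rw [pow_add]

lemma qfZ_succ (n : ℕ) : qfZ (n + 1) = qfZ n * qnZ (n + 1) :=
  Finset.prod_range_succ _ _

lemma gbZ_mul_fac : ∀ n k, k ≤ n → gbZ n k * (qfZ k * qfZ (n - k)) = qfZ n := by
  intro n
  induction n with
  | zero =>
    intro k hk
    interval_cases k
    show (1 : Polynomial ℤ) * (qfZ 0 * qfZ 0) = qfZ 0
    simp [qfZ]
  | succ n ih =>
    intro k hk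
    match k with
    | 0 =>
      show (1 : Polynomial ℤ) * (qfZ 0 * qfZ (n + 1)) = qfZ (n + 1)
      simp [qfZ]
    | j + 1 =>
      rcases eq_or_lt_of_le hk with he | hlt
      · -- j = n
        have hj : j = n := by omega
        subst hj
        have h1 := ih j le_rfl
        rw [gbZ, gbZ_eq_zero j (j + 1) (by omega)]
        simp only [Nat.sub_self] at h1 ⊢
        have hq0 : qfZ 0 = 1 := by simp [qfZ]
        rw [hq0] at h1 ⊢
        rw [qfZ_succ]
        linear_combination (qnZ (j + 1) * (qfZ j + 1) - qfZ (j + 1)) *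
          mul_zero (Polynomial.X ^ (j + 1) : Polynomial ℤ) + qnZ (j + 1) * h1
      · -- j + 1 ≤ n
        have hjn : j + 1 ≤ n := by omega
        have h1 := ih j (by omega)
        have h2 := ih (j + 1) hjn
        have hnj : n - j = (n - (j + 1)) + 1 := by omega
        have hnsub : n + 1 - (j + 1) = (n - (j + 1)) + 1 := by omega
        have hsplit : qnZ (n + 1) =
            qnZ (j + 1) + Polynomial.X ^ (j + 1) * qnZ ((n - (j + 1)) + 1) := by
          rw [show n + 1 = (j + 1) + ((n - (j + 1)) + 1) by omega, qnZ_add]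
        rw [hnj, qfZ_succ] at h1
        rw [qfZ_succ] at h2
        rw [hnsub, qfZ_succ (n - (j + 1)), qfZ_succ j, qfZ_succ n, hsplit, gbZ]
        linear_combination qnZ (j + 1) * h1 +
          Polynomial.X ^ (j + 1) * qnZ ((n - (j + 1)) + 1) * h2

/-! ### Mapping to `ℚ` and `RatFunc ℚ` -/

lemma qnat_eq_map (m : ℕ) : qnat m = (qnZ m).map (Int.castRingHom ℚ) := by
  simp [qnat, qnZ, Polynomial.map_sum]

noncomputable def qfQ (n : ℕ) : Polynomial ℚ := ∏ i ∈ Finset.range n, qnat (i + 1)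

lemma qfQ_eq_map (n : ℕ) : qfQ n = (qfZ n).map (Int.castRingHom ℚ) := by
  simp [qfQ, qfZ, Polynomial.map_prod, qnat_eq_map]

lemma gbQ_mul_fac (n k : ℕ) (hk : k ≤ n) :
    (gbZ n k).map (Int.castRingHom ℚ) * (qfQ k * qfQ (n - k)) = qfQ n := by
  rw [qfQ_eq_map, qfQ_eq_map, qfQ_eq_map, ← Polynomial.map_mul, ← Polynomial.map_mul,
    gbZ_mul_fac n k hk]

lemma one_sub_X_pow (m : ℕ) :
    (1 : Polynomial ℚ) - Polynomial.X ^ m = (1 - Polynomial.X) * qnat m := by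
  have h := geom_sum_mul (Polynomial.X : Polynomial ℚ) m
  rw [qnat]
  linear_combination h

lemma qnat_ne_zero (m : ℕ) (hm : 0 < m) : qnat m ≠ 0 := by
  intro h
  have h2 := congrArg (Polynomial.eval 1) h
  simp [qnat, Polynomial.eval_finset_sum] at h2
  omega

lemma qfQ_ne_zero (n : ℕ) : qfQ n ≠ 0 := by
  rw [qfQ]
  exact Finset.prod_ne_zero_iff.mpr fun i _ => qnat_ne_zero (i + 1) (by omega)

lemma one_sub_X_ne_zero : (1 - Polynomial.X : Polynomial ℚ) ≠ 0 := by
  intro h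
  have h2 := congrArg (Polynomial.eval 0) h
  simp at h2

lemma qp_X_eq (n : ℕ) :
    qp (RatFunc.X : RatFunc ℚ) RatFunc.X n =
      algebraMap (Polynomial ℚ) (RatFunc ℚ) ((1 - Polynomial.X) ^ n * qfQ n) := by
  rw [qp]
  have h : ∀ j ∈ Finset.range n, (1 - RatFunc.X * RatFunc.X ^ j : RatFunc ℚ)
      = algebraMap (Polynomial ℚ) (RatFunc ℚ) ((1 - Polynomial.X) * qnat (j + 1)) := by
    intro j _
    rw [← one_sub_X_pow, map_sub, map_one, map_pow, RatFunc.algebraMap_X, pow_succ']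
  rw [Finset.prod_congr rfl h, ← map_prod, Finset.prod_mul_distrib, Finset.prod_const,
    Finset.card_range, qfQ]

lemma qbin_eq (n k : ℕ) (hk : k ≤ n) :
    qbin n k = algebraMap (Polynomial ℚ) (RatFunc ℚ) ((gbZ n k).map (Int.castRingHom ℚ)) := by
  have hp : ((1 - Polynomial.X : Polynomial ℚ)) ^ k * (1 - Polynomial.X) ^ (n - k)
      = (1 - Polynomial.X) ^ n := by
    rw [← pow_add]; congr 1; omega
  have h2 := gbQ_mul_fac n k hk
  have key : (((1 - Polynomial.X) ^ k * qfQ k) * ((1 - Polynomial.X) ^ (n - k) * qfQ (n - k)))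
      * ((gbZ n k).map (Int.castRingHom ℚ))
      = (1 - Polynomial.X) ^ n * qfQ n := by
    linear_combination ((1 - Polynomial.X : Polynomial ℚ)) ^ n * h2
      + (qfQ k * qfQ (n - k) * ((gbZ n k).map (Int.castRingHom ℚ))) * hp
  have hD : (((1 - Polynomial.X : Polynomial ℚ)) ^ k * qfQ k) *
      ((1 - Polynomial.X) ^ (n - k) * qfQ (n - k)) ≠ 0 := by
    apply mul_ne_zero <;> apply mul_ne_zero
    · exact pow_ne_zero _ one_sub_X_ne_zero
    · exact qfQ_ne_zero k
    · exact pow_ne_zero _ one_sub_X_ne_zero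
    · exact qfQ_ne_zero (n - k)
  rw [qbin, qp_X_eq, qp_X_eq, qp_X_eq, ← map_mul, ← key, map_mul,
    mul_div_cancel_left₀]
  exact RatFunc.algebraMap_ne_zero hD

/-! ### Cyclotomic factorization -/

lemma qnat_prod (m : ℕ) (hm : 0 < m) :
    qnat m = ∏ d ∈ m.divisors.erase 1, Polynomial.cyclotomic d ℚ := by
  have h1 : (1 : ℕ) ∈ m.divisors := Nat.one_mem_divisors.mpr (by omega)
  have hX : (Polynomial.X - 1 : Polynomial ℚ) ≠ 0 := by
    intro h
    have h2 := congrArg (Polynomial.eval 0) h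
    simp at h2
  have hprod := Polynomial.prod_cyclotomic_eq_X_pow_sub_one hm ℚ
  rw [← Finset.mul_prod_erase _ _ h1, Polynomial.cyclotomic_one] at hprod
  have hg : qnat m * (Polynomial.X - 1) = Polynomial.X ^ m - 1 := by
    rw [qnat]; exact geom_sum_mul _ _
  apply mul_right_cancel₀ hX
  rw [hg, ← hprod]; ring

lemma cyc_prime (d : ℕ) (hd : 0 < d) : Prime (Polynomial.cyclotomic d ℚ) :=
  (Polynomial.cyclotomic.irreducible_rat hd).prime

lemma cyc_eq_of_dvd (d e : ℕ) (hd : 0 < d) (he : 0 < e)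
    (h : Polynomial.cyclotomic d ℚ ∣ Polynomial.cyclotomic e ℚ) : d = e := by
  have h1 := Polynomial.cyclotomic.irreducible_rat hd
  have h2 := Polynomial.cyclotomic.irreducible_rat he
  have ha : Associated (Polynomial.cyclotomic d ℚ) (Polynomial.cyclotomic e ℚ) :=
    h1.associated_of_dvd h2 h
  have heq := Polynomial.eq_of_monic_of_associated
    (Polynomial.cyclotomic.monic d ℚ) (Polynomial.cyclotomic.monic e ℚ) ha
  exact Polynomial.cyclotomic_injective heq

lemma cyc_dvd_qnat (d m : ℕ) (hd : 2 ≤ d) (hm : 0 < m) (hdvd : d ∣ m) :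
    ∃ s, qnat m = Polynomial.cyclotomic d ℚ * s ∧ ¬ Polynomial.cyclotomic d ℚ ∣ s := by
  have hdm : d ∈ m.divisors.erase 1 := by
    rw [Finset.mem_erase, Nat.mem_divisors]
    exact ⟨by omega, hdvd, by omega⟩
  refine ⟨∏ e ∈ (m.divisors.erase 1).erase d, Polynomial.cyclotomic e ℚ, ?_, ?_⟩
  · rw [qnat_prod m hm, ← Finset.mul_prod_erase _ _ hdm]
  · intro hdd
    obtain ⟨e, he, hde⟩ := (Prime.dvd_finset_prod_iff (cyc_prime d (by omega)) _).mp hdd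
    have he1 := Finset.mem_erase.mp he
    have he2 : 0 < e := Nat.pos_of_mem_divisors (Finset.mem_of_mem_erase (Finset.mem_of_mem_erase he))
    exact he1.1 (cyc_eq_of_dvd d e (by omega) he2 hde).symm

lemma not_cyc_dvd_qnat (d m : ℕ) (hd : 2 ≤ d) (hm : 0 < m) (hdvd : ¬ d ∣ m) :
    ¬ Polynomial.cyclotomic d ℚ ∣ qnat m := by
  intro h
  rw [qnat_prod m hm] at h
  obtain ⟨e, he, hde⟩ := (Prime.dvd_finset_prod_iff (cyc_prime d (by omega)) _).mp h
  have he2 : 0 < e := Nat.pos_of_mem_divisors (Finset.mem_of_mem_erase he)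
  have := cyc_eq_of_dvd d e (by omega) he2 hde
  subst this
  exact hdvd (Nat.dvd_of_mem_divisors (Finset.mem_of_mem_erase he))

lemma qfQ_factor (d : ℕ) (hd : 2 ≤ d) (n : ℕ) :
    ∃ r, qfQ n = Polynomial.cyclotomic d ℚ ^ (n / d) * r ∧
      ¬ Polynomial.cyclotomic d ℚ ∣ r := by
  induction n with
  | zero =>
    exact ⟨1, by simp [qfQ], fun h =>
      (cyc_prime d (by omega)).not_unit (isUnit_of_dvd_one h)⟩
  | succ n ih =>
    obtain ⟨r, hr, hnd⟩ := ih
    have hq : qfQ (n + 1) = qfQ n * qnat (n + 1) := Finset.prod_range_succ _ _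
    by_cases hdvd : d ∣ (n + 1)
    · obtain ⟨s, hs, hnds⟩ := cyc_dvd_qnat d (n + 1) hd (by omega) hdvd
      refine ⟨r * s, ?_, ?_⟩
      · have hdiv : (n + 1) / d = n / d + 1 := by
          rw [Nat.succ_div]; simp [hdvd]
        rw [hq, hr, hs, hdiv, pow_succ]; ring
      · intro h
        rcases (cyc_prime d (by omega)).dvd_mul.mp h with h | h
        · exact hnd h
        · exact hnds h
    · refine ⟨r * qnat (n + 1), ?_, ?_⟩
      · have hdiv : (n + 1) / d = n / d := by
          rw [Nat.succ_div]; simp [hdvd]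
        rw [hq, hr, hdiv]; ring
      · intro h
        rcases (cyc_prime d (by omega)).dvd_mul.mp h with h | h
        · exact hnd h
        · exact not_cyc_dvd_qnat d (n + 1) hd (by omega) hdvd h

lemma cyc_dvd_gb (N d : ℕ) (hd : 2 ≤ d) (hval : 2 * (2 * N / d) + 1 ≤ 4 * N / d) :
    Polynomial.cyclotomic d ℚ ∣ (gbZ (4 * N) (2 * N)).map (Int.castRingHom ℚ) := by
  obtain ⟨R, hR, hRnd⟩ := qfQ_factor d hd (4 * N)
  obtain ⟨S, hS, hSnd⟩ := qfQ_factor d hd (2 * N)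
  have key := gbQ_mul_fac (4 * N) (2 * N) (by omega)
  rw [show 4 * N - 2 * N = 2 * N by omega] at key
  set G := (gbZ (4 * N) (2 * N)).map (Int.castRingHom ℚ) with hG
  set Φ := Polynomial.cyclotomic d ℚ with hΦdef
  set a := 4 * N / d with ha
  set b := 2 * N / d with hb
  rw [hS, hR] at key
  have hΦ : Φ ≠ 0 := (cyc_prime d (by omega)).ne_zero
  have h2 : Φ ^ (2 * b) * (G * (S * S)) = Φ ^ (2 * b) * (Φ ^ (a - 2 * b) * R) := by
    have hpow : Φ ^ a = Φ ^ (2 * b) * Φ ^ (a - 2 * b) := by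
      rw [← pow_add]; congr 1; omega
    calc Φ ^ (2 * b) * (G * (S * S)) = G * (Φ ^ b * S * (Φ ^ b * S)) := by
          rw [two_mul, pow_add]; ring
      _ = Φ ^ a * R := key
      _ = Φ ^ (2 * b) * (Φ ^ (a - 2 * b) * R) := by rw [hpow]; ring
  have h3 : G * (S * S) = Φ ^ (a - 2 * b) * R :=
    mul_left_cancel₀ (pow_ne_zero _ hΦ) h2
  have h4 : Φ ∣ G * (S * S) := by
    rw [h3]
    exact Dvd.dvd.mul_right (dvd_pow_self Φ (by omega)) R
  rcases (cyc_prime d (by omega)).dvd_mul.mp h4 with h | h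
  · exact h
  · rcases (cyc_prime d (by omega)).dvd_mul.mp h with h | h
    · exact absurd h hSnd
    · exact absurd h hSnd

lemma div_bound (N d : ℕ) (hN : 0 < N) (hdvd : d ∣ N + 1) (h5 : 5 ≤ d) :
    2 * (2 * N / d) + 1 ≤ 4 * N / d := by
  obtain ⟨m, hm⟩ := hdvd
  rcases Nat.eq_zero_or_pos m with h0 | h0
  · subst h0; simp at hm
  obtain ⟨m', rfl⟩ : ∃ m', m = m' + 1 := ⟨m - 1, by omega⟩
  have hmul : d * (m' + 1) = d * m' + d := by ring
  have e2 : 2 * N = d * (2 * m' + 1) + (d - 2) := by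
    have h : d * (2 * m' + 1) = 2 * (d * m') + d := by ring
    omega
  have e4 : 4 * N = d * (4 * m' + 3) + (d - 4) := by
    have h : d * (4 * m' + 3) = 4 * (d * m') + 3 * d := by ring
    omega
  have d2 : 2 * N / d = 2 * m' + 1 := by
    rw [e2, Nat.mul_add_div (by omega), Nat.div_eq_of_lt (by omega)]
  have d4 : 4 * N / d = 4 * m' + 3 := by
    rw [e4, Nat.mul_add_div (by omega), Nat.div_eq_of_lt (by omega)]
  omega

/-- `[N+1]_q` divides `[4N,2N]_q` in `ℤ[q]` when `gcd(N+1,6)=1`. -/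
theorem stmt14 (N : ℕ) (hN : 0 < N) (hcop : Nat.Coprime (N + 1) 6) :
    ∃ P : Polynomial ℤ,
      qbin (4 * N) (2 * N) =
        algebraMap (Polynomial ℚ) (RatFunc ℚ)
          (qnat (N + 1) * P.map (Int.castRingHom ℚ)) := by
  have hdvdQ : qnat (N + 1) ∣ (gbZ (4 * N) (2 * N)).map (Int.castRingHom ℚ) := by
    rw [qnat_prod (N + 1) (by omega)]
    apply Finset.prod_dvd_of_coprime
    · intro x hx y hy hxy
      exact Polynomial.cyclotomic.isCoprime_rat hxy
    · intro d hd
      have hd1 : d ≠ 1 := (Finset.mem_erase.mp hd).1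
      have hddvd : d ∣ N + 1 := Nat.dvd_of_mem_divisors (Finset.mem_of_mem_erase hd)
      have hdpos : 0 < d := Nat.pos_of_mem_divisors (Finset.mem_of_mem_erase hd)
      have hcop' : Nat.Coprime d 6 := Nat.Coprime.coprime_dvd_left hddvd hcop
      have h5 : 5 ≤ d := by
        by_contra h
        push_neg at h
        interval_cases d <;> simp_all [Nat.Coprime]
      exact cyc_dvd_gb N d (by omega) (div_bound N d hN hddvd h5)
  have hmonic : (qnZ (N + 1)).Monic := Polynomial.monic_geom_sum_X (by omega)
  have hdvdZ : qnZ (N + 1) ∣ gbZ (4 * N) (2 * N) := by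
    rw [← Polynomial.map_dvd_map (Int.castRingHom ℚ) Int.cast_injective hmonic]
    rw [← qnat_eq_map]
    exact hdvdQ
  obtain ⟨P, hP⟩ := hdvdZ
  refine ⟨P, ?_⟩
  rw [qbin_eq (4 * N) (2 * N) (by omega), hP, Polynomial.map_mul, ← qnat_eq_map]
end

section
/- Let n be a positive odd integer, r a positive integer, and M = n-1 or (n-1)/2. Then sum_{k=0}^{M} (-1)^k q^{k^2+(r-2)k} [4k+1] * (q;q^2)_k^{2r-1}/(q^2;q^2)_k^{2r-1} ≡ 0 (mod Phi_n(q)) for n > 1; the key step is that for 0 <= k <= (n-1)/2 the k-th and ((n-1)/2 - k)-th summands sum to 0 modulo Phi_n(q). -/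
open Finset Polynomial

/-- the exponent `k²+(r-2)k` as a natural number. -/
def stE (r j : ℕ) : ℕ := j * j + (r - 1) * j - j

lemma stE_cast {r : ℕ} (hr : 0 < r) (j : ℕ) :
    ((stE r j : ℤ)) = j * j + r * j - 2 * j := by
  have h1 : j ≤ j * j + (r - 1) * j := by
    rcases Nat.eq_zero_or_pos j with h | h
    · simp [h]
    · calc j = j * 1 := (mul_one j).symm
        _ ≤ j * j := Nat.mul_le_mul_left j h
        _ ≤ j * j + (r - 1) * j := Nat.le_add_right _ _
  unfold stE
  push_cast [Nat.cast_sub h1, Nat.cast_sub hr]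
  ring

lemma st_gaussA (k : ℕ) : ∑ i ∈ Finset.range k, 2 * (i + 1) = k * k + k := by
  induction k with
  | zero => simp
  | succ p ih => rw [Finset.sum_range_succ, ih]; ring

lemma st_gaussB (k : ℕ) : ∑ i ∈ Finset.range k, (2 * i + 1) = k * k := by
  induction k with
  | zero => simp
  | succ p ih => rw [Finset.sum_range_succ, ih]; ring

lemma st_gauss1 (k : ℕ) : ∑ i ∈ Finset.range k, 2 * (k - i) = k * k + k := by
  rw [← st_gaussA k, ← Finset.sum_range_reflect (fun i => 2 * (i + 1)) k]
  exact Finset.sum_congr rfl fun i hi => by rw [Finset.mem_range] at hi; omega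

lemma st_gauss2 (k : ℕ) : ∑ i ∈ Finset.range k, (2 * (k - i) - 1) = k * k := by
  rw [← st_gaussB k, ← Finset.sum_range_reflect (fun i => 2 * i + 1) k]
  exact Finset.sum_congr rfl fun i hi => by rw [Finset.mem_range] at hi; omega

lemma st_core {n : ℕ} {ζ : ℂ} (hz : ζ ^ n = 1) (k : ℕ) (u v : ℕ → ℕ)
    (huv : ∀ i < k, u i + v i = n) :
    (∏ i ∈ Finset.range k, (1 - ζ ^ u i)) * ζ ^ (∑ i ∈ Finset.range k, v i) =
      (-1) ^ k * ∏ i ∈ Finset.range k, (1 - ζ ^ v i) := by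
  rw [← Finset.prod_pow_eq_pow_sum, ← Finset.prod_mul_distrib]
  have : ((-1 : ℂ)) ^ k = ∏ _i ∈ Finset.range k, (-1 : ℂ) := by
    simp
  rw [this, ← Finset.prod_mul_distrib]
  refine Finset.prod_congr rfl fun i hi => ?_
  rw [Finset.mem_range] at hi
  have : ζ ^ u i * ζ ^ v i = 1 := by rw [← pow_add, huv i hi, hz]
  linear_combination -this

/-- `A m * ζ^(k²+k) = A (m-k) * ((-1)^k * B k)` where `A` is the odd product and
`B` the even product. -/
lemma st_A {n m : ℕ} (hm : n = 2 * m + 1) {ζ : ℂ} (hz : ζ ^ n = 1) {k : ℕ} (hk : k ≤ m) :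
    (∏ i ∈ Finset.range m, (1 - ζ ^ (2 * i + 1))) * ζ ^ (k * k + k) =
      (∏ i ∈ Finset.range (m - k), (1 - ζ ^ (2 * i + 1))) *
        ((-1) ^ k * ∏ i ∈ Finset.range k, (1 - ζ ^ (2 * i + 2))) := by
  obtain ⟨d, rfl⟩ : ∃ d, m = d + k := ⟨m - k, by omega⟩
  rw [Finset.prod_range_add, show d + k - k = d by omega, mul_assoc]
  congr 1
  have hcore := st_core hz k (fun i => 2 * (d + i) + 1) (fun i => 2 * (k - i))
    (fun i hi => by omega)
  rw [st_gauss1] at hcore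
  rw [hcore]
  congr 1
  rw [← Finset.prod_range_reflect (fun i => 1 - ζ ^ (2 * i + 2)) k]
  refine Finset.prod_congr rfl fun i hi => ?_
  rw [Finset.mem_range] at hi
  rw [show 2 * (k - 1 - i) + 2 = 2 * (k - i) by omega]

lemma st_B {n m : ℕ} (hm : n = 2 * m + 1) {ζ : ℂ} (hz : ζ ^ n = 1) {k : ℕ} (hk : k ≤ m) :
    (∏ i ∈ Finset.range m, (1 - ζ ^ (2 * i + 2))) * ζ ^ (k * k) =
      (∏ i ∈ Finset.range (m - k), (1 - ζ ^ (2 * i + 2))) *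
        ((-1) ^ k * ∏ i ∈ Finset.range k, (1 - ζ ^ (2 * i + 1))) := by
  obtain ⟨d, rfl⟩ : ∃ d, m = d + k := ⟨m - k, by omega⟩
  rw [Finset.prod_range_add, show d + k - k = d by omega, mul_assoc]
  congr 1
  have hcore := st_core hz k (fun i => 2 * (d + i) + 2) (fun i => 2 * (k - i) - 1)
    (fun i hi => by omega)
  rw [st_gauss2] at hcore
  rw [hcore]
  congr 1
  rw [← Finset.prod_range_reflect (fun i => 1 - ζ ^ (2 * i + 1)) k]
  refine Finset.prod_congr rfl fun i hi => ?_
  rw [Finset.mem_range] at hi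
  rw [show 2 * (k - 1 - i) + 1 = 2 * (k - i) - 1 by omega]

lemma st_G {n m : ℕ} (hm : n = 2 * m + 1) {ζ : ℂ} (hz : ζ ^ n = 1) (hz1 : ζ ≠ 1)
    {k : ℕ} (hk : k ≤ m) :
    (∑ i ∈ Finset.range (4 * (m - k) + 1), ζ ^ i) * ζ ^ (4 * k + 1) =
      -(∑ i ∈ Finset.range (4 * k + 1), ζ ^ i) := by
  refine mul_right_cancel₀ (sub_ne_zero.mpr hz1) ?_
  have g1 := geom_sum_mul ζ (4 * (m - k) + 1)
  have g2 := geom_sum_mul ζ (4 * k + 1)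
  have hp : ζ ^ (4 * (m - k) + 1) * ζ ^ (4 * k + 1) = 1 := by
    rw [← pow_add, show 4 * (m - k) + 1 + (4 * k + 1) = n * 2 by omega, pow_mul, hz, one_pow]
  linear_combination ζ ^ (4 * k + 1) * g1 + g2 + hp

lemma st_qp_odd {ζ : ℂ} (j : ℕ) :
    qp ζ (ζ ^ 2) j = ∏ i ∈ Finset.range j, (1 - ζ ^ (2 * i + 1)) := by
  unfold qp
  refine Finset.prod_congr rfl fun i _ => ?_
  rw [← pow_mul, ← pow_succ']

lemma st_qp_even {ζ : ℂ} (j : ℕ) :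
    qp (ζ ^ 2) (ζ ^ 2) j = ∏ i ∈ Finset.range j, (1 - ζ ^ (2 * i + 2)) := by
  unfold qp
  refine Finset.prod_congr rfl fun i _ => ?_
  rw [← pow_mul, ← pow_add]
  norm_num
  ring_nf

lemma st_bne {n m : ℕ} (hm : n = 2 * m + 1) {ζ : ℂ} (hprim : IsPrimitiveRoot ζ n)
    {j : ℕ} (hj : j < n) :
    ∏ i ∈ Finset.range j, (1 - ζ ^ (2 * i + 2)) ≠ 0 := by
  rw [Finset.prod_ne_zero_iff]
  intro i hi
  rw [Finset.mem_range] at hi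
  refine sub_ne_zero.mpr fun h => ?_
  have hd := (hprim.pow_eq_one_iff_dvd (2 * i + 2)).mp h.symm
  obtain ⟨c, hc⟩ := hd
  have hc2 : c < 2 := by nlinarith [hc]
  interval_cases c <;> omega

lemma st_ane {n m : ℕ} (hm : n = 2 * m + 1) {ζ : ℂ} (hprim : IsPrimitiveRoot ζ n)
    {j : ℕ} (hj : j ≤ m) :
    ∏ i ∈ Finset.range j, (1 - ζ ^ (2 * i + 1)) ≠ 0 := by
  rw [Finset.prod_ne_zero_iff]
  intro i hi
  rw [Finset.mem_range] at hi
  refine sub_ne_zero.mpr fun h => ?_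
  have hd := (hprim.pow_eq_one_iff_dvd (2 * i + 1)).mp h.symm
  obtain ⟨c, hc⟩ := hd
  have hc2 : c < 1 := by nlinarith [hc]
  interval_cases c <;> omega

lemma st_azero {n m : ℕ} (hm : n = 2 * m + 1) {ζ : ℂ} (hz : ζ ^ n = 1)
    {j : ℕ} (hj : m < j) :
    ∏ i ∈ Finset.range j, (1 - ζ ^ (2 * i + 1)) = 0 := by
  refine Finset.prod_eq_zero (Finset.mem_range.mpr hj) ?_
  rw [show 2 * m + 1 = n from hm.symm, hz, sub_self]

/-- summand of the sum, as a complex number. -/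
noncomputable def stT (r : ℕ) (ζ : ℂ) (j : ℕ) : ℂ :=
  (-1) ^ j * ζ ^ stE r j * (∑ i ∈ Finset.range (4 * j + 1), ζ ^ i) *
    (∏ i ∈ Finset.range j, (1 - ζ ^ (2 * i + 1))) ^ (2 * r - 1) /
    (∏ i ∈ Finset.range j, (1 - ζ ^ (2 * i + 2))) ^ (2 * r - 1)

lemma st_pair {n m r : ℕ} (hm : n = 2 * m + 1) (hn : 1 < n) (hr : 0 < r) {ζ : ℂ}
    (hprim : IsPrimitiveRoot ζ n) {k : ℕ} (hk : k ≤ m) :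
    stT r ζ k + stT r ζ (m - k) = 0 := by
  have hz : ζ ^ n = 1 := hprim.pow_eq_one
  have hz1 : ζ ≠ 1 := hprim.ne_one hn
  have hz0 : ζ ≠ 0 := by
    intro h
    rw [h, zero_pow (by omega : n ≠ 0)] at hz
    exact zero_ne_one hz
  have h1 := st_A hm hz hk
  have h2 := st_B hm hz hk
  have h4 : (∏ i ∈ Finset.range m, (1 - ζ ^ (2 * i + 2))) * ζ ^ (m * m) =
      (-1) ^ m * ∏ i ∈ Finset.range m, (1 - ζ ^ (2 * i + 1)) := by
    have := st_B hm hz (le_refl m)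
    simpa using this
  have h3 := st_G hm hz hz1 hk
  have hbk : (∏ i ∈ Finset.range k, (1 - ζ ^ (2 * i + 2))) ≠ 0 :=
    st_bne hm hprim (by omega)
  have hbmk : (∏ i ∈ Finset.range (m - k), (1 - ζ ^ (2 * i + 2))) ≠ 0 :=
    st_bne hm hprim (by omega)
  unfold stT
  set w : ℂ := (-1 : ℂ) with hw
  set s : ℕ := 2 * r - 1 with hs
  set Ak := ∏ i ∈ Finset.range k, (1 - ζ ^ (2 * i + 1)) with hAk
  set Amk := ∏ i ∈ Finset.range (m - k), (1 - ζ ^ (2 * i + 1)) with hAmk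
  set Am := ∏ i ∈ Finset.range m, (1 - ζ ^ (2 * i + 1)) with hAm
  set Bk := ∏ i ∈ Finset.range k, (1 - ζ ^ (2 * i + 2)) with hBk
  set Bmk := ∏ i ∈ Finset.range (m - k), (1 - ζ ^ (2 * i + 2)) with hBmk
  set Bm := ∏ i ∈ Finset.range m, (1 - ζ ^ (2 * i + 2)) with hBm
  set Gk := ∑ i ∈ Finset.range (4 * k + 1), ζ ^ i with hGk
  set Gmk := ∑ i ∈ Finset.range (4 * (m - k) + 1), ζ ^ i with hGmk
  have hww : w ^ k * w ^ k = 1 := by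
    rw [hw, ← pow_add]
    exact Even.neg_one_pow ⟨k, rfl⟩
  -- base product identities
  have hP1 : Amk * Bk = w ^ k * Am * ζ ^ (k * k + k) := by
    linear_combination (-(w ^ k)) * h1 - (Amk * Bk) * hww
  have hP2 : Ak * Bmk * ζ ^ (m * m) = w ^ (k + m) * Am * ζ ^ (k * k) := by
    linear_combination (-(w ^ k) * ζ ^ (m * m)) * h2 + (w ^ k * ζ ^ (k * k)) * h4
      - (ζ ^ (m * m) * Bmk * Ak) * hww
  -- powered versions
  have hP1s : Amk ^ s * Bk ^ s = w ^ (k * s) * Am ^ s * ζ ^ ((k * k + k) * s) := by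
    rw [← mul_pow, hP1, mul_pow, mul_pow, ← pow_mul, ← pow_mul]
  have hP2s : Ak ^ s * Bmk ^ s * ζ ^ (m * m * s) =
      w ^ ((k + m) * s) * Am ^ s * ζ ^ (k * k * s) := by
    rw [← mul_pow, pow_mul ζ (m * m) s, ← mul_pow, hP2, mul_pow, mul_pow, ← pow_mul, ← pow_mul]
  -- sign identity
  have hsgn : w ^ (k + (k + m) * s) = w ^ ((m - k) + k * s) := by
    obtain ⟨d, rfl⟩ : ∃ d, m = k + d := ⟨m - k, by omega⟩
    obtain ⟨r', rfl⟩ : ∃ r', r = r' + 1 := ⟨r - 1, by omega⟩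
    have he : k + (k + (k + d)) * s = ((k + d) - k) + k * s + 2 * (k + (k + d) * r') := by
      rw [hs, show 2 * (r' + 1) - 1 = 2 * r' + 1 by omega, show k + d - k = d by omega]
      ring
    rw [he, pow_add, pow_mul, show w ^ 2 = 1 by rw [hw]; norm_num, one_pow, mul_one]
  -- zeta exponent identity
  have hzeta : ζ ^ (stE r k + (4 * k + 1) + k * k * s) =
      ζ ^ (stE r (m - k) + (k * k + k) * s + m * m * s) := by
    have hEnat : stE r k + (4 * k + 1) + k * k * s + n * (r * m) =
        stE r (m - k) + (k * k + k) * s + m * m * s + n * (k + 1) := by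
      have hcast : ((stE r k + (4 * k + 1) + k * k * s + n * (r * m) : ℕ) : ℤ) =
          ((stE r (m - k) + (k * k + k) * s + m * m * s + n * (k + 1) : ℕ) : ℤ) := by
        push_cast [stE_cast hr, Nat.cast_sub hk, hs, Nat.cast_sub (by omega : 1 ≤ 2 * r), hm]
        ring
      exact_mod_cast hcast
    calc ζ ^ (stE r k + (4 * k + 1) + k * k * s)
        = ζ ^ (stE r k + (4 * k + 1) + k * k * s) * (ζ ^ n) ^ (r * m) := by
          rw [hz, one_pow, mul_one]
      _ = ζ ^ (stE r k + (4 * k + 1) + k * k * s + n * (r * m)) := by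
          rw [← pow_mul, ← pow_add]
      _ = ζ ^ (stE r (m - k) + (k * k + k) * s + m * m * s + n * (k + 1)) := by rw [hEnat]
      _ = ζ ^ (stE r (m - k) + (k * k + k) * s + m * m * s) * (ζ ^ n) ^ (k + 1) := by
          rw [← pow_mul, ← pow_add]
      _ = _ := by rw [hz, one_pow, mul_one]
  rw [div_add_div _ _ (pow_ne_zero s hbk) (pow_ne_zero s hbmk), _root_.div_eq_zero_iff]
  left
  have hzc : ζ ^ (m * m * s + (4 * k + 1)) ≠ 0 := pow_ne_zero _ hz0
  have key : (w ^ k * ζ ^ stE r k * Gk * Ak ^ s * Bmk ^ s +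
      Bk ^ s * (w ^ (m - k) * ζ ^ stE r (m - k) * Gmk * Amk ^ s)) *
      ζ ^ (m * m * s + (4 * k + 1)) = 0 := by
    linear_combination (w ^ k * ζ ^ (stE r k) * Gk * ζ ^ (4 * k + 1)) * hP2s
      + (w ^ (m - k) * ζ ^ (stE r (m - k)) * ζ ^ (m * m * s)) * (Amk ^ s * Bk ^ s) * h3
      + (w ^ (m - k) * ζ ^ (stE r (m - k)) * (-Gk) * ζ ^ (m * m * s)) * hP1s
      + (Gk * Am ^ s * ζ ^ (stE r k + (4 * k + 1) + k * k * s)) * hsgn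
      + (w ^ ((m - k) + k * s) * Gk * Am ^ s) * hzeta
  exact (mul_eq_zero.mp key).resolve_right hzc

lemma st_zero {n m r : ℕ} (hm : n = 2 * m + 1) (hr : 0 < r) {ζ : ℂ} (hz : ζ ^ n = 1)
    {j : ℕ} (hj : m < j) : stT r ζ j = 0 := by
  unfold stT
  rw [st_azero hm hz hj, zero_pow (by omega : 2 * r - 1 ≠ 0), mul_zero, zero_div]

lemma st_sum_half {n m r : ℕ} (hm : n = 2 * m + 1) (hn : 1 < n) (hr : 0 < r) {ζ : ℂ}
    (hprim : IsPrimitiveRoot ζ n) :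
    ∑ j ∈ Finset.range (m + 1), stT r ζ j = 0 := by
  have hrefl : ∑ j ∈ Finset.range (m + 1), stT r ζ (m - j) =
      ∑ j ∈ Finset.range (m + 1), stT r ζ j := by
    rw [← Finset.sum_range_reflect (fun j => stT r ζ j) (m + 1)]
    exact Finset.sum_congr rfl fun j hj => by rw [Finset.mem_range] at hj; congr 1
  have hzero : ∑ j ∈ Finset.range (m + 1), (stT r ζ j + stT r ζ (m - j)) = 0 :=
    Finset.sum_eq_zero fun j hj => st_pair hm hn hr hprim (by
      rw [Finset.mem_range] at hj; omega)
  rw [Finset.sum_add_distrib, hrefl] at hzero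
  exact add_self_eq_zero.mp hzero

lemma st_sum_full {n m r : ℕ} (hm : n = 2 * m + 1) (hn : 1 < n) (hr : 0 < r) {ζ : ℂ}
    (hprim : IsPrimitiveRoot ζ n) :
    ∑ j ∈ Finset.range n, stT r ζ j = 0 := by
  rw [show n = (m + 1) + m by omega, Finset.sum_range_add, st_sum_half hm hn hr hprim,
    zero_add]
  exact Finset.sum_eq_zero fun i _ => st_zero hm hr hprim.pow_eq_one (by omega)

/-- Bridge: divisibility of the numerator from vanishing at a primitive root. -/
lemma st_num_dvd {n : ℕ} (hn : 0 < n) {ζ : ℂ} (hprim : IsPrimitiveRoot ζ n)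
    {x : RatFunc ℚ} {N D : Polynomial ℚ}
    (hx : x = algebraMap (Polynomial ℚ) (RatFunc ℚ) N / algebraMap (Polynomial ℚ) (RatFunc ℚ) D)
    (hD : Polynomial.aeval ζ D ≠ 0) (hN : Polynomial.aeval ζ N = 0) :
    Polynomial.cyclotomic n ℚ ∣ x.num := by
  have hD0 : D ≠ 0 := by rintro rfl; simp at hD
  have hden : algebraMap (Polynomial ℚ) (RatFunc ℚ) x.denom ≠ 0 :=
    RatFunc.algebraMap_ne_zero x.denom_ne_zero
  have hDm : algebraMap (Polynomial ℚ) (RatFunc ℚ) D ≠ 0 := RatFunc.algebraMap_ne_zero hD0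
  have heq : algebraMap (Polynomial ℚ) (RatFunc ℚ) x.num /
      algebraMap (Polynomial ℚ) (RatFunc ℚ) x.denom =
      algebraMap (Polynomial ℚ) (RatFunc ℚ) N / algebraMap (Polynomial ℚ) (RatFunc ℚ) D := by
    rw [RatFunc.num_div_denom]; exact hx
  rw [div_eq_div_iff hden hDm, ← map_mul, ← map_mul] at heq
  have hpoly : x.num * D = N * x.denom := RatFunc.algebraMap_injective ℚ heq
  have hev := congrArg (Polynomial.aeval ζ) hpoly
  rw [map_mul, map_mul, hN, zero_mul] at hev
  have hnum : Polynomial.aeval ζ x.num = 0 := by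
    rcases mul_eq_zero.mp hev with h | h
    · exact h
    · exact absurd h hD
  rw [Polynomial.cyclotomic_eq_minpoly_rat hprim hn]
  exact minpoly.dvd ℚ ζ hnum

/-- Bridge for sums over a range. -/
lemma st_sum_dvd {n : ℕ} (hn : 0 < n) {ζ : ℂ} (hprim : IsPrimitiveRoot ζ n)
    {M : ℕ} (f : ℕ → RatFunc ℚ) (N D : ℕ → Polynomial ℚ)
    (hf : ∀ k < M, f k = algebraMap (Polynomial ℚ) (RatFunc ℚ) (N k) /
      algebraMap (Polynomial ℚ) (RatFunc ℚ) (D k))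
    (hD : ∀ k < M, Polynomial.aeval ζ (D k) ≠ 0)
    (hT : ∑ k ∈ Finset.range M, Polynomial.aeval ζ (N k) / Polynomial.aeval ζ (D k) = 0) :
    Polynomial.cyclotomic n ℚ ∣ (∑ k ∈ Finset.range M, f k).num := by
  have hD0 : ∀ k < M, D k ≠ 0 := fun k hk h => hD k hk (by rw [h]; simp)
  refine st_num_dvd hn hprim (N := ∑ k ∈ Finset.range M, N k *
      ∏ i ∈ (Finset.range M).erase k, D i) (D := ∏ i ∈ Finset.range M, D i) ?_ ?_ ?_
  · rw [map_sum, Finset.sum_div]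
    refine Finset.sum_congr rfl fun k hk => ?_
    rw [Finset.mem_range] at hk
    have hCk : algebraMap (Polynomial ℚ) (RatFunc ℚ)
        (∏ i ∈ (Finset.range M).erase k, D i) ≠ 0 :=
      RatFunc.algebraMap_ne_zero (Finset.prod_ne_zero_iff.mpr fun i hi =>
        hD0 i (Finset.mem_range.mp (Finset.mem_of_mem_erase hi)))
    rw [hf k hk, map_mul,
      ← Finset.mul_prod_erase (Finset.range M) D (Finset.mem_range.mpr hk), map_mul,
      mul_div_mul_right _ _ hCk]
  · rw [map_prod]
    exact Finset.prod_ne_zero_iff.mpr fun i hi => hD i (Finset.mem_range.mp hi)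
  · rw [map_sum]
    have := congrArg (· * ∏ i ∈ Finset.range M, Polynomial.aeval ζ (D i)) hT
    simp only [Finset.sum_mul, zero_mul] at this
    rw [← this]
    refine Finset.sum_congr rfl fun k hk => ?_
    rw [map_mul, map_prod]
    rw [← Finset.mul_prod_erase (Finset.range M) (fun i => Polynomial.aeval ζ (D i)) hk]
    have hDk := hD k (Finset.mem_range.mp hk)
    field_simp

/-- pairing of summands mod `Φ_n(q)` and the congruence
`∑_{k=0}^{M} (-1)^k q^{k^2+(r-2)k} [4k+1] (q;q^2)_k^{2r-1}/(q^2;q^2)_k^{2r-1}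
≡ 0 (mod Φ_n(q))` for `M = n-1` and `M = (n-1)/2`. -/
theorem stmt15 (n r : ℕ) (hn : 1 < n) (hodd : Odd n) (hr : 0 < r) :
    letI q : RatFunc ℚ := RatFunc.X
    letI t : ℕ → RatFunc ℚ := fun j =>
      (-1 : RatFunc ℚ) ^ j * q ^ ((j : ℤ) ^ 2 + ((r : ℤ) - 2) * (j : ℤ)) *
        qint (4 * j + 1) * (qp q (q ^ 2) j) ^ (2 * r - 1) /
        (qp (q ^ 2) (q ^ 2) j) ^ (2 * r - 1)
    (∀ k ≤ (n - 1) / 2,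
        Polynomial.cyclotomic n ℚ ∣ (t k + t ((n - 1) / 2 - k)).num) ∧
    (Polynomial.cyclotomic n ℚ ∣ (∑ k ∈ Finset.range n, t k).num) ∧
    (Polynomial.cyclotomic n ℚ ∣ (∑ k ∈ Finset.range ((n - 1) / 2 + 1), t k).num) := by
  set t : ℕ → RatFunc ℚ := fun j =>
      (-1 : RatFunc ℚ) ^ j * RatFunc.X ^ ((j : ℤ) ^ 2 + ((r : ℤ) - 2) * (j : ℤ)) *
        qint (4 * j + 1) * (qp RatFunc.X (RatFunc.X ^ 2) j) ^ (2 * r - 1) /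
        (qp (RatFunc.X ^ 2) (RatFunc.X ^ 2) j) ^ (2 * r - 1) with htdef
  obtain ⟨m, hm⟩ := hodd
  have hm2 : (n - 1) / 2 = m := by omega
  have hn0 : 0 < n := by omega
  set ζ : ℂ := Complex.exp (2 * Real.pi * Complex.I / n) with hζ
  have hprim : IsPrimitiveRoot ζ n := Complex.isPrimitiveRoot_exp n (by omega)
  set N : ℕ → Polynomial ℚ := fun j => (-1) ^ j * Polynomial.X ^ stE r j *
      qnat (4 * j + 1) *
      (∏ i ∈ Finset.range j, (1 - Polynomial.X * (Polynomial.X ^ 2) ^ i)) ^ (2 * r - 1)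
      with hN
  set D : ℕ → Polynomial ℚ := fun j =>
      (∏ i ∈ Finset.range j, (1 - Polynomial.X ^ 2 * (Polynomial.X ^ 2) ^ i)) ^ (2 * r - 1)
      with hD
  have hexp : ∀ j : ℕ, ((j : ℤ) ^ 2 + ((r : ℤ) - 2) * (j : ℤ)) = ((stE r j : ℕ) : ℤ) :=
    fun j => by rw [stE_cast hr]; push_cast; ring
  have ht : ∀ j, t j = algebraMap (Polynomial ℚ) (RatFunc ℚ) (N j) /
      algebraMap (Polynomial ℚ) (RatFunc ℚ) (D j) := by
    intro j
    simp only [htdef]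
    rw [hexp j, zpow_natCast]
    simp only [hN, hD, qp, qint, qnat, map_mul, map_pow, map_prod, map_sub, map_one,
      map_neg, map_sum, RatFunc.algebraMap_X]
  have hDval : ∀ j, Polynomial.aeval ζ (D j) =
      (∏ i ∈ Finset.range j, (1 - ζ ^ (2 * i + 2))) ^ (2 * r - 1) := by
    intro j
    rw [← st_qp_even]
    simp only [hD, qp, map_pow, map_prod, map_sub, map_one, map_mul, Polynomial.aeval_X]
  have hNval : ∀ j, Polynomial.aeval ζ (N j) =
      (-1) ^ j * ζ ^ stE r j * (∑ i ∈ Finset.range (4 * j + 1), ζ ^ i) *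
        (∏ i ∈ Finset.range j, (1 - ζ ^ (2 * i + 1))) ^ (2 * r - 1) := by
    intro j
    rw [← st_qp_odd]
    simp only [hN, qp, qnat, map_mul, map_pow, map_prod, map_sub, map_one, map_neg,
      map_sum, Polynomial.aeval_X]
  have hTT : ∀ j, Polynomial.aeval ζ (N j) / Polynomial.aeval ζ (D j) = stT r ζ j := by
    intro j
    rw [hNval j, hDval j]
    unfold stT
    ring
  have hDne : ∀ j, j < n → Polynomial.aeval ζ (D j) ≠ 0 := by
    intro j hj
    rw [hDval j]
    exact pow_ne_zero _ (st_bne hm hprim hj)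
  refine ⟨?_, ?_, ?_⟩
  · intro k hk
    rw [hm2] at hk ⊢
    have hdvd := st_sum_dvd hn0 hprim (M := 2)
      (fun i => t (if i = 0 then k else m - k))
      (fun i => N (if i = 0 then k else m - k))
      (fun i => D (if i = 0 then k else m - k))
      (fun i _ => ht _)
      (fun i _ => hDne (if i = 0 then k else m - k) (by split <;> omega))
      (by
        rw [Finset.sum_range_succ, Finset.sum_range_one]
        norm_num
        rw [hTT k, hTT (m - k)]
        exact st_pair hm hn hr hprim hk)
    rw [Finset.sum_range_succ, Finset.sum_range_one] at hdvd
    simpa using hdvd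
  · have hT : ∑ k ∈ Finset.range n, Polynomial.aeval ζ (N k) / Polynomial.aeval ζ (D k) = 0 := by
      rw [Finset.sum_congr rfl fun k _ => hTT k]
      exact st_sum_full hm hn hr hprim
    exact st_sum_dvd hn0 hprim t N D (fun k _ => ht k) (fun k hk => hDne k hk) hT
  · rw [hm2]
    have hT : ∑ k ∈ Finset.range (m + 1),
        Polynomial.aeval ζ (N k) / Polynomial.aeval ζ (D k) = 0 := by
      rw [Finset.sum_congr rfl fun k _ => hTT k]
      exact st_sum_half hm hn hr hprim
    exact st_sum_dvd hn0 hprim t N D (fun k _ => ht k)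
      (fun k hk => hDne k (by omega)) hT
end

section
/- For the continuous q-ultraspherical polynomials C_n(x; beta | q) = sum_{k=0}^{n} (beta;q)_k (beta;q)_{n-k}/((q;q)_k (q;q)_{n-k}) * e^{i(n-2k)theta} with x = cos theta, Rogers' linearization formula holds: C_m(x;beta|q) C_n(x;beta|q) = sum_{k=0}^{min(m,n)} ((q;q)_{m+n-2k}(beta;q)_{m-k}(beta;q)_{n-k}(beta;q)_k(beta^2;q)_{m+n-k}) / ((beta^2;q)_{m+n-2k}(q;q)_{m-k}(q;q)_{n-k}(q;q)_k(q beta;q)_{m+n-k}) * ((1-beta q^{m+n-2k})/(1-beta)) * C_{m+n-2k}(x;beta|q). -/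
open Finset

/-- The `q`-shifted factorial `(a;q)_k` over `ℂ`. -/
noncomputable def qpC (a q : ℂ) (k : ℕ) : ℂ :=
  ∏ j ∈ Finset.range k, (1 - a * q ^ j)

/-- The continuous `q`-ultraspherical polynomial `C_n(x;β|q)` written in the
variable `z = e^{iθ}` (so that `x = cos θ = (z+z⁻¹)/2` and
`e^{i(n-2k)θ} = z^{n-2k}`). -/
noncomputable def Cq (q β z : ℂ) (n : ℕ) : ℂ :=
  ∑ k ∈ Finset.range (n + 1),
    qpC β q k * qpC β q (n - k) / (qpC q q k * qpC q q (n - k)) *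
      z ^ ((n : ℤ) - 2 * (k : ℤ))

noncomputable def Ac (q β : ℂ) (m n k : ℕ) : ℂ :=
  qpC q q (m + n - 2 * k) * qpC β q (m - k) * qpC β q (n - k) * qpC β q k *
      qpC (β ^ 2) q (m + n - k) /
    (qpC (β ^ 2) q (m + n - 2 * k) * qpC q q (m - k) * qpC q q (n - k) *
      qpC q q k * qpC (β * q) q (m + n - k)) *
    ((1 - β * q ^ (m + n - 2 * k)) / (1 - β))

lemma qp_succ (a q : ℂ) (k : ℕ) : qpC a q (k+1) = qpC a q k * (1 - a * q ^ k) :=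
  Finset.prod_range_succ _ _

lemma leaf_comb (X1 X2 X3 X4 X5 Y1 Y2 Y3 Y4 Y5 w q1 q2 q3 s1 s2 s3 s4 r1 r2 r3
    d1 d2 d3 t1 t2 t3 t4 u1 u2 u3 l1 l2 l3 L c12 c3 : ℂ)
    (hY1 : Y1 ≠ 0) (hY2 : Y2 ≠ 0) (hY3 : Y3 ≠ 0) (hY4 : Y4 ≠ 0) (hY5 : Y5 ≠ 0)
    (hw : w ≠ 0) (hd1 : d1 ≠ 0) (hd2 : d2 ≠ 0) (hd3 : d3 ≠ 0)
    (ht1 : t1 ≠ 0) (ht2 : t2 ≠ 0) (ht3 : t3 ≠ 0) (ht4 : t4 ≠ 0)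
    (hu1 : u1 ≠ 0) (hu2 : u2 ≠ 0) (hu3 : u3 ≠ 0) (hl2 : l2 ≠ 0) (hl3 : l3 ≠ 0)
    (key : L*s1*s4*r3*l1*t3 = c12*s4*d2*t1*t3*u3 + c12*q3*s1*s3*r3*t4
            - c3*s3*l1*t1*t4*u3) :
    L * (X1*q1*q2 * (X2*s1) * (X3*s2) * (X4*s4) * (X5*r1*r2*r3) /
        (Y1*d1*d2 * (Y2*t1) * (Y3*t2) * (Y4*t4) * (Y5*u1*u2*u3)) * (l1/w))
    = c12 * (X1*q1 * X2 * (X3*s2) * (X4*s4) * (X5*r1*r2) /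
        (Y1*d1 * Y2 * (Y3*t2) * (Y4*t4) * (Y5*u1*u2)) * (l2/w)) * q2 * l2⁻¹
    + c12 * (X1*q1*q2*q3 * (X2*s1) * (X3*s2*s3) * X4 * (X5*r1*r2*r3) /
        (Y1*d1*d2*d3 * (Y2*t1) * (Y3*t2*t3) * Y4 * (Y5*u1*u2*u3)) * (l3/w)) * d3 * l3⁻¹
    - c3 * (X1*q1*q2 * X2 * (X3*s2*s3) * X4 * (X5*r1*r2) /
        (Y1*d1*d2 * Y2 * (Y3*t2*t3) * Y4 * (Y5*u1*u2)) * (l1/w)) := by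
  have hD : (Y1*Y2*Y3*Y4*Y5*w*d1*d2*t1*t2*t3*t4*u1*u2*u3 : ℂ) ≠ 0 := by
    apply_rules [mul_ne_zero]
  have E1 : L * (X1*q1*q2 * (X2*s1) * (X3*s2) * (X4*s4) * (X5*r1*r2*r3) /
        (Y1*d1*d2 * (Y2*t1) * (Y3*t2) * (Y4*t4) * (Y5*u1*u2*u3)) * (l1/w))
      = (L*s1*s4*r3*l1*t3) * (X1*X2*X3*X4*X5*q1*q2*s2*r1*r2)
          / (Y1*Y2*Y3*Y4*Y5*w*d1*d2*t1*t2*t3*t4*u1*u2*u3) := by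
    simp only [← div_eq_mul_inv, div_mul_div_comm, mul_div_assoc', div_mul_eq_mul_div,
      div_div]
    rw [div_eq_div_iff (by apply_rules [mul_ne_zero]) (by apply_rules [mul_ne_zero])]
    ring
  have E2 : c12 * (X1*q1 * X2 * (X3*s2) * (X4*s4) * (X5*r1*r2) /
        (Y1*d1 * Y2 * (Y3*t2) * (Y4*t4) * (Y5*u1*u2)) * (l2/w)) * q2 * l2⁻¹
      = (c12*s4*d2*t1*t3*u3) * (X1*X2*X3*X4*X5*q1*q2*s2*r1*r2)
          / (Y1*Y2*Y3*Y4*Y5*w*d1*d2*t1*t2*t3*t4*u1*u2*u3) := by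
    simp only [← div_eq_mul_inv, div_mul_div_comm, mul_div_assoc', div_mul_eq_mul_div,
      div_div]
    rw [div_eq_div_iff (by apply_rules [mul_ne_zero]) (by apply_rules [mul_ne_zero])]
    ring
  have E3 : c12 * (X1*q1*q2*q3 * (X2*s1) * (X3*s2*s3) * X4 * (X5*r1*r2*r3) /
        (Y1*d1*d2*d3 * (Y2*t1) * (Y3*t2*t3) * Y4 * (Y5*u1*u2*u3)) * (l3/w)) * d3 * l3⁻¹
      = (c12*q3*s1*s3*r3*t4) * (X1*X2*X3*X4*X5*q1*q2*s2*r1*r2)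
          / (Y1*Y2*Y3*Y4*Y5*w*d1*d2*t1*t2*t3*t4*u1*u2*u3) := by
    simp only [← div_eq_mul_inv, div_mul_div_comm, mul_div_assoc', div_mul_eq_mul_div,
      div_div]
    rw [div_eq_div_iff (by apply_rules [mul_ne_zero]) (by apply_rules [mul_ne_zero])]
    ring
  have E4 : c3 * (X1*q1*q2 * X2 * (X3*s2*s3) * X4 * (X5*r1*r2) /
        (Y1*d1*d2 * Y2 * (Y3*t2*t3) * Y4 * (Y5*u1*u2)) * (l1/w))
      = (c3*s3*l1*t1*t4*u3) * (X1*X2*X3*X4*X5*q1*q2*s2*r1*r2)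
          / (Y1*Y2*Y3*Y4*Y5*w*d1*d2*t1*t2*t3*t4*u1*u2*u3) := by
    simp only [← div_eq_mul_inv, div_mul_div_comm, mul_div_assoc', div_mul_eq_mul_div,
      div_div]
    rw [div_eq_div_iff (by apply_rules [mul_ne_zero]) (by apply_rules [mul_ne_zero])]
    ring
  rw [E1, E2, E3, E4, ← add_div, div_sub_div_same]
  exact congrArg (· / (Y1*Y2*Y3*Y4*Y5*w*d1*d2*t1*t2*t3*t4*u1*u2*u3))
    (by linear_combination (X1*X2*X3*X4*X5*q1*q2*s2*r1*r2) * key)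

lemma step_mid (q β : ℂ) (a b e : ℕ)
    (hY1 : qpC (β^2) q (2*b+e) ≠ 0) (hY2 : qpC q q b ≠ 0)
    (hY3 : qpC q q (b+e) ≠ 0) (hY4 : qpC q q a ≠ 0)
    (hY5 : qpC (β*q) q (a+2*b+e) ≠ 0) (hw : (1:ℂ) - β ≠ 0)
    (hd1 : 1 - β^2*q^(2*b+e) ≠ 0) (hd2 : 1 - β^2*q^(2*b+e+1) ≠ 0)
    (hd3 : 1 - β^2*q^(2*b+e+2) ≠ 0)
    (ht1 : 1 - q*q^b ≠ 0) (ht2 : 1 - q*q^(b+e) ≠ 0) (ht3 : 1 - q*q^(b+e+1) ≠ 0)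
    (ht4 : 1 - q*q^a ≠ 0)
    (hu1 : 1 - β*q*q^(a+2*b+e) ≠ 0) (hu2 : 1 - β*q*q^(a+2*b+e+1) ≠ 0)
    (hu3 : 1 - β*q*q^(a+2*b+e+2) ≠ 0)
    (hl2 : 1 - β*q^(2*b+e+1) ≠ 0) (hl3 : 1 - β*q^(2*b+e+3) ≠ 0) :
    (1 - q^(a+b+2)) * Ac q β (a+b+2) (a+b+e+2) (a+1)
      = (1 - β*q^(a+b+1)) * Ac q β (a+b+1) (a+b+e+2) (a+1)
          * (1 - q*q^(2*b+e+1)) * (1 - β*q^(2*b+e+1))⁻¹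
        + (1 - β*q^(a+b+1)) * Ac q β (a+b+1) (a+b+e+2) a
          * (1 - β^2*q^(2*b+e+2)) * (1 - β*q^(2*b+e+3))⁻¹
        - (1 - β^2*q^(a+b)) * Ac q β (a+b) (a+b+e+2) a := by
  have key : (1 - q^(a+b+2)) * (1 - β*q^b) * (1 - β*q^a) * (1 - β^2*q^(a+2*b+e+2))
        * (1 - β*q^(2*b+e+2)) * (1 - q*q^(b+e+1))
      = (1 - β*q^(a+b+1)) * (1 - β*q^a) * (1 - β^2*q^(2*b+e+1)) * (1 - q*q^b)
          * (1 - q*q^(b+e+1)) * (1 - β*q*q^(a+2*b+e+2))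
        + (1 - β*q^(a+b+1)) * (1 - q*q^(2*b+e+2)) * (1 - β*q^b) * (1 - β*q^(b+e+1))
          * (1 - β^2*q^(a+2*b+e+2)) * (1 - q*q^a)
        - (1 - β^2*q^(a+b)) * (1 - β*q^(b+e+1)) * (1 - β*q^(2*b+e+2)) * (1 - q*q^b)
          * (1 - q*q^a) * (1 - β*q*q^(a+2*b+e+2)) := by
    ring
  simp only [Ac]
  rw [show a+b+2 + (a+b+e+2) - 2*(a+1) = 2*b+e+2 from by omega,
      show a+b+2 - (a+1) = b+1 from by omega,
      show a+b+e+2 - (a+1) = b+e+1 from by omega,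
      show a+b+2 + (a+b+e+2) - (a+1) = a+2*b+e+3 from by omega,
      show a+b+1 + (a+b+e+2) - 2*(a+1) = 2*b+e+1 from by omega,
      show a+b+1 - (a+1) = b from by omega,
      show a+b+1 + (a+b+e+2) - (a+1) = a+2*b+e+2 from by omega,
      show a+b+1 + (a+b+e+2) - 2*a = 2*b+e+3 from by omega,
      show a+b+1 - a = b+1 from by omega,
      show a+b+e+2 - a = b+e+2 from by omega,
      show a+b+1 + (a+b+e+2) - a = a+2*b+e+3 from by omega,
      show a+b + (a+b+e+2) - 2*a = 2*b+e+2 from by omega,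
      show a+b - a = b from by omega,
      show a+b + (a+b+e+2) - a = a+2*b+e+2 from by omega]
  simp only [show 2*b+e+3 = (2*b+e+2)+1 from rfl, show 2*b+e+2 = (2*b+e+1)+1 from rfl,
    show 2*b+e+1 = (2*b+e)+1 from rfl, show b+e+2 = (b+e+1)+1 from rfl,
    show b+e+1 = (b+e)+1 from rfl, show a+2*b+e+3 = (a+2*b+e+2)+1 from rfl,
    show a+2*b+e+2 = (a+2*b+e+1)+1 from rfl, show a+2*b+e+1 = (a+2*b+e)+1 from rfl]
  simp only [qp_succ]
  apply leaf_comb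
  · exact hY1
  · exact hY2
  · exact hY3
  · exact hY4
  · exact hY5
  · exact hw
  · exact hd1
  · exact hd2
  · exact hd3
  · exact ht1
  · exact ht2
  · exact ht3
  · exact ht4
  · exact hu1
  · exact hu2
  · exact hu3
  · exact hl2
  · exact hl3
  · exact key

lemma qp_zero (a q : ℂ) : qpC a q 0 = 1 := by simp [qpC]

lemma qp_one (a q : ℂ) : qpC a q 1 = 1 - a := by simp [qpC]

lemma qp_succ' (a q : ℂ) (k : ℕ) : qpC a q (k+1) = (1 - a) * qpC (a*q) q k := by
  rw [qpC, Finset.prod_range_succ']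
  simp only [pow_zero, mul_one]
  rw [mul_comm]
  congr 1
  · refine Finset.prod_congr rfl fun j hj => ?_
    rw [pow_succ']
    ring_nf

lemma Ac_zero (q β : ℂ) (n : ℕ) (hw : (1:ℂ) - β ≠ 0)
    (h1 : qpC q q n ≠ 0) (h2 : qpC (β^2) q n ≠ 0) (h3 : qpC (β*q) q n ≠ 0) :
    Ac q β 0 n 0 = 1 := by
  have hrel : qpC β q n * (1 - β*q^n) = (1-β) * qpC (β*q) q n := by
    rw [← qp_succ, qp_succ']
  simp only [Ac]
  simp only [show 0+n-2*0 = n from by omega, show (0:ℕ)-0 = 0 from by omega,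
      show n-0 = n from by omega, show 0+n-0 = n from by omega]
  simp only [qp_zero, mul_one, one_mul]
  rw [div_mul_div_comm, div_eq_one_iff_eq (by apply_rules [mul_ne_zero])]
  linear_combination (qpC q q n * qpC (β^2) q n) * hrel

lemma base1a (q β : ℂ) (p : ℕ) (hw : (1:ℂ) - β ≠ 0) (h1q : (1:ℂ) - q ≠ 0)
    (hA : qpC (β^2) q (p+1) ≠ 0) (hfa : 1 - β^2*q^(p+1) ≠ 0)
    (hq1 : qpC q q (p+1) ≠ 0) (hq2 : 1 - q*q^(p+1) ≠ 0)
    (hB : qpC (β*q) q (p+1) ≠ 0) (hfb : 1 - β*q*q^(p+1) ≠ 0)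
    (hbq : 1 - β*q^(p+1) ≠ 0) :
    Ac q β 1 (p+1) 0 = (1-β) * (1 - q*q^(p+1)) / ((1-q) * (1 - β*q^(p+1))) := by
  have hrel : qpC β q (p+1) * (1 - β*q^(p+1)) = (1-β) * qpC (β*q) q (p+1) := by
    rw [← qp_succ, qp_succ']
  simp only [Ac]
  simp only [show 1+(p+1)-2*0 = p+1+1 from by omega, show 1-0 = 1 from by omega,
      show p+1-0 = p+1 from by omega, show 1+(p+1)-0 = p+1+1 from by omega]
  rw [qp_succ q q (p+1), qp_succ (β^2) q (p+1), qp_succ (β*q) q (p+1), qp_one, qp_one]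
  simp only [qp_zero, mul_one, one_mul]
  rw [div_mul_div_comm,
    div_eq_div_iff (by apply_rules [mul_ne_zero]) (by apply_rules [mul_ne_zero])]
  linear_combination ((1-β)*(1 - q*q^(p+1))*(1-q)*qpC q q (p+1)*qpC (β^2) q (p+1)
    *(1 - β^2*q^(p+1))*(1 - β*q*q^(p+1))) * hrel

lemma base1b (q β : ℂ) (p : ℕ) (hw : (1:ℂ) - β ≠ 0) (h1q : (1:ℂ) - q ≠ 0)
    (hA : qpC (β^2) q p ≠ 0) (hfa : 1 - β^2*q^p ≠ 0)
    (hq1 : qpC q q p ≠ 0) (hq2 : 1 - β*q*q^p ≠ 0)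
    (hB : qpC (β*q) q p ≠ 0) (hbq : 1 - β*q^(p+1) ≠ 0) :
    Ac q β 1 (p+1) 1 = (1-β) * (1 - β^2*q^p) / ((1-q) * (1 - β*q^(p+1))) := by
  have hrel : qpC β q p * (1 - β*q^p) = (1-β) * qpC (β*q) q p := by
    rw [← qp_succ, qp_succ']
  simp only [Ac]
  simp only [show 1+(p+1)-2*1 = p from by omega, show 1-1 = 0 from by omega,
      show p+1-1 = p from by omega, show 1+(p+1)-1 = p+1 from by omega]
  rw [qp_succ (β^2) q p, qp_succ (β*q) q p, qp_one, qp_one]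
  simp only [qp_zero, mul_one, one_mul]
  rw [div_mul_div_comm,
    div_eq_div_iff (by apply_rules [mul_ne_zero]) (by apply_rules [mul_ne_zero])]
  linear_combination ((1-β)*(1 - β^2*q^p)*(1-q)*qpC q q p*qpC (β^2) q p
    *(1 - β*q*q^p)) * hrel

lemma step0 (q β : ℂ) (m e : ℕ) (hw : (1:ℂ) - β ≠ 0)
    (hA : qpC (β^2) q (2*m+e+3) ≠ 0) (hfa : 1 - β^2*q^(2*m+e+3) ≠ 0)
    (hq1 : qpC q q (m+1) ≠ 0) (hq2 : 1 - q*q^(m+1) ≠ 0)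
    (hq3 : qpC q q (m+e+2) ≠ 0)
    (hB : qpC (β*q) q (2*m+e+3) ≠ 0) (hfb : 1 - β*q*q^(2*m+e+3) ≠ 0)
    (hg : 1 - β*q^(2*m+e+3) ≠ 0) :
    (1 - q^(m+2)) * Ac q β (m+2) (m+e+2) 0
      = (1 - β*q^(m+1)) * Ac q β (m+1) (m+e+2) 0
          * (1 - q*q^(2*m+e+3)) * (1 - β*q^(2*m+e+3))⁻¹ := by
  simp only [Ac]
  simp only [show m+2+(m+e+2)-2*0 = 2*m+e+3+1 from by omega,
      show m+2-0 = m+1+1 from by omega,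
      show m+e+2-0 = m+e+2 from by omega,
      show m+2+(m+e+2)-0 = 2*m+e+3+1 from by omega,
      show m+1+(m+e+2)-2*0 = 2*m+e+3 from by omega,
      show m+1-0 = m+1 from by omega,
      show m+1+(m+e+2)-0 = 2*m+e+3 from by omega]
  rw [qp_succ q q (2*m+e+3), qp_succ β q (m+1), qp_succ (β^2) q (2*m+e+3),
      qp_succ (β*q) q (2*m+e+3), qp_succ q q (m+1)]
  simp only [qp_zero, mul_one, one_mul]
  simp only [← div_eq_mul_inv, div_mul_div_comm, mul_div_assoc', div_mul_eq_mul_div,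
    div_div]
  rw [div_eq_div_iff (by apply_rules [mul_ne_zero]) (by apply_rules [mul_ne_zero])]
  ring

lemma steptop (q β : ℂ) (m e : ℕ) (hw : (1:ℂ) - β ≠ 0)
    (hA : qpC (β^2) q e ≠ 0) (hfa : 1 - β^2*q^e ≠ 0)
    (hQ : qpC q q e ≠ 0) (hfq : 1 - q*q^e ≠ 0)
    (hq1 : qpC q q (m+1) ≠ 0) (hq2 : 1 - q*q^(m+1) ≠ 0)
    (hB : qpC (β*q) q (m+e+2) ≠ 0)
    (hg : 1 - β*q^(e+1) ≠ 0) :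
    (1 - q^(m+2)) * Ac q β (m+2) (m+e+2) (m+2)
      = (1 - β*q^(m+1)) * Ac q β (m+1) (m+e+2) (m+1)
          * (1 - β^2*q^e) * (1 - β*q^(e+1))⁻¹ := by
  simp only [Ac]
  simp only [show m+2+(m+e+2)-2*(m+2) = e from by omega,
      show m+2-(m+2) = 0 from by omega,
      show m+e+2-(m+2) = e from by omega,
      show m+2+(m+e+2)-(m+2) = m+e+2 from by omega,
      show m+1+(m+e+2)-2*(m+1) = e+1 from by omega,
      show m+1-(m+1) = 0 from by omega,
      show m+e+2-(m+1) = e+1 from by omega,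
      show m+1+(m+e+2)-(m+1) = m+e+2 from by omega]
  simp only [show (m+2 : ℕ) = m+1+1 from rfl]
  rw [qp_succ q q e, qp_succ β q e, qp_succ (β^2) q e, qp_succ β q (m+1),
      qp_succ q q (m+1)]
  simp only [qp_zero, mul_one, one_mul]
  simp only [← div_eq_mul_inv, div_mul_div_comm, mul_div_assoc', div_mul_eq_mul_div,
    div_div]
  rw [div_eq_div_iff (by apply_rules [mul_ne_zero]) (by apply_rules [mul_ne_zero])]
  ring

lemma qp_factor_ne {a q : ℂ} {k j : ℕ} (h : qpC a q k ≠ 0) (hj : j < k) :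
    1 - a * q ^ j ≠ 0 := by
  intro h0
  exact h (Finset.prod_eq_zero (Finset.mem_range.2 hj) h0)

lemma Cq_rec (q β z : ℂ) (hz : z ≠ 0) (n : ℕ)
    (hq : ∀ k, k ≤ n + 2 → qpC q q k ≠ 0) :
    (1 - β * q ^ (n+1)) * ((z + z⁻¹) * Cq q β z (n+1)) =
      (1 - q ^ (n+2)) * Cq q β z (n+2) + (1 - β^2 * q ^ n) * Cq q β z n := by
  set c : ℕ → ℕ → ℂ := fun N k =>
    qpC β q k * qpC β q (N - k) / (qpC q q k * qpC q q (N - k)) with hc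
  set d : ℕ → ℂ := fun k => (1 - β * q ^ (n+1)) * c (n+1) k with hd
  set e : ℕ → ℂ := fun k => (1 - q ^ (n+2)) * c (n+2) k with he
  set f : ℕ → ℂ := fun k => (1 - β^2 * q ^ n) * c n k with hf
  have hL : (1 - β * q ^ (n+1)) * ((z + z⁻¹) * Cq q β z (n+1))
      = (∑ k ∈ range (n+2), d k * z ^ (((n+2:ℕ):ℤ) - 2*(k:ℤ))) +
        (∑ k ∈ range (n+2), d k * z ^ (((n+2:ℕ):ℤ) - 2*((k:ℤ)+1))) := by
    rw [Cq, Finset.mul_sum, Finset.mul_sum, ← Finset.sum_add_distrib]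
    refine Finset.sum_congr rfl fun k hk => ?_
    have e1 : (((n+2:ℕ):ℤ) - 2*(k:ℤ)) = (((n+1:ℕ):ℤ) - 2*(k:ℤ)) + 1 := by
      push_cast; ring
    have e2 : (((n+2:ℕ):ℤ) - 2*((k:ℤ)+1)) = (((n+1:ℕ):ℤ) - 2*(k:ℤ)) - 1 := by
      push_cast; ring
    rw [e1, e2, zpow_add_one₀ hz, zpow_sub_one₀ hz]
    simp only [hd, hc]
    ring
  have hR : (1 - q ^ (n+2)) * Cq q β z (n+2) + (1 - β^2 * q ^ n) * Cq q β z n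
      = (∑ k ∈ range (n+3), e k * z ^ (((n+2:ℕ):ℤ) - 2*(k:ℤ))) +
        (∑ k ∈ range (n+1), f k * z ^ (((n+2:ℕ):ℤ) - 2*((k:ℤ)+1))) := by
    rw [Cq, Cq, Finset.mul_sum, Finset.mul_sum]
    congr 1
    · refine Finset.sum_congr rfl fun k hk => ?_
      simp only [he, hc]; ring
    · refine Finset.sum_congr rfl fun k hk => ?_
      have e2 : (((n+2:ℕ):ℤ) - 2*((k:ℤ)+1)) = ((n:ℕ):ℤ) - 2*(k:ℤ) := by
        push_cast; ring
      rw [e2]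
      simp only [hf, hc]; ring
  rw [hL, hR]
  have A1 : (∑ k ∈ range (n+2), d k * z ^ (((n+2:ℕ):ℤ) - 2*(k:ℤ)))
      = ∑ k ∈ range (n+3), (if k < n+2 then d k else 0) * z ^ (((n+2:ℕ):ℤ) - 2*(k:ℤ)) := by
    conv_rhs => rw [Finset.sum_range_succ]
    rw [if_neg (lt_irrefl _), zero_mul, add_zero]
    exact Finset.sum_congr rfl fun k hk => by rw [if_pos (Finset.mem_range.1 hk)]
  have A2 : (∑ k ∈ range (n+2), d k * z ^ (((n+2:ℕ):ℤ) - 2*((k:ℤ)+1)))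
      = ∑ k ∈ range (n+3), (if 1 ≤ k then d (k-1) else 0) * z ^ (((n+2:ℕ):ℤ) - 2*(k:ℤ)) := by
    conv_rhs => rw [Finset.sum_range_succ']
    rw [if_neg (show ¬ (1:ℕ) ≤ 0 by omega), zero_mul, add_zero]
    refine Finset.sum_congr rfl fun k hk => ?_
    have e2 : (((n+2:ℕ):ℤ) - 2*((k:ℤ)+1)) = (((n+2:ℕ):ℤ) - 2*((k+1:ℕ):ℤ)) := by
      push_cast; ring
    rw [e2, if_pos (show 1 ≤ k+1 by omega), Nat.add_sub_cancel]
  have A3 : (∑ k ∈ range (n+1), f k * z ^ (((n+2:ℕ):ℤ) - 2*((k:ℤ)+1)))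
      = ∑ k ∈ range (n+3), (if 1 ≤ k ∧ k ≤ n+1 then f (k-1) else 0)
          * z ^ (((n+2:ℕ):ℤ) - 2*(k:ℤ)) := by
    conv_rhs => rw [Finset.sum_range_succ]
    rw [if_neg (show ¬((1 ≤ n+2) ∧ (n+2 ≤ n+1)) by omega), zero_mul, add_zero]
    conv_rhs => rw [Finset.sum_range_succ']
    rw [if_neg (show ¬((1 ≤ 0) ∧ ((0:ℕ) ≤ n+1)) by omega), zero_mul, add_zero]
    refine Finset.sum_congr rfl fun k hk => ?_
    have hk' := Finset.mem_range.1 hk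
    have e2 : (((n+2:ℕ):ℤ) - 2*((k:ℤ)+1)) = (((n+2:ℕ):ℤ) - 2*((k+1:ℕ):ℤ)) := by
      push_cast; ring
    rw [e2, if_pos (show (1 ≤ k+1) ∧ (k+1 ≤ n+1) by omega), Nat.add_sub_cancel]
  rw [A1, A2, A3, ← Finset.sum_add_distrib, ← Finset.sum_add_distrib]
  refine Finset.sum_congr rfl fun k hk => ?_
  have hk' := Finset.mem_range.1 hk
  rw [← add_mul, ← add_mul]
  refine congrArg (· * z ^ (((n+2:ℕ):ℤ) - 2*(k:ℤ))) ?_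
  rcases Nat.eq_zero_or_pos k with rfl | hk1
  · rw [if_pos (show 0 < n+2 by omega), if_neg (show ¬ (1:ℕ) ≤ 0 by omega),
      if_neg (show ¬((1 ≤ 0) ∧ ((0:ℕ) ≤ n+1)) by omega), add_zero, add_zero]
    simp only [hd, he, hc, Nat.sub_zero, qp_zero, one_mul]
    have p1 : qpC β q (n+2) = qpC β q (n+1) * (1 - β * q^(n+1)) := qp_succ _ _ _
    have p2 : qpC q q (n+2) = qpC q q (n+1) * (1 - q * q^(n+1)) := qp_succ _ _ _
    have h1 : qpC q q (n+1) ≠ 0 := hq _ (by omega)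
    have h2 : (1 - q * q^(n+1)) ≠ 0 := qp_factor_ne (hq (n+2) le_rfl) (by omega)
    rw [p1, p2, show (1:ℂ) - q^(n+2) = 1 - q * q^(n+1) by rw [← pow_succ']]
    have h2' : 1 - q^(n+1)*q ≠ 0 := by rwa [mul_comm]
    field_simp
  · have hk1' : 1 ≤ k := hk1
    rcases Nat.lt_or_ge k (n+2) with hk2 | hk2
    · rw [if_pos hk2, if_pos hk1', if_pos (show (1 ≤ k) ∧ (k ≤ n+1) by omega)]
      obtain ⟨a, b, rfl, rfl⟩ : ∃ a b, k = a+1 ∧ n = a+b :=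
        ⟨k-1, n-(k-1), by omega, by omega⟩
      simp only [hd, he, hf, hc, Nat.add_sub_cancel]
      rw [show a + b + 1 - (a+1) = b from by omega,
          show a + b + 1 - a = b + 1 from by omega,
          show a + b + 2 - (a+1) = b + 1 from by omega,
          show a + b - a = b from by omega]
      have pa : qpC β q (a+1) = qpC β q a * (1 - β * q^a) := qp_succ _ _ _
      have pb : qpC β q (b+1) = qpC β q b * (1 - β * q^b) := qp_succ _ _ _
      have qa : qpC q q (a+1) = qpC q q a * (1 - q * q^a) := qp_succ _ _ _
      have qb : qpC q q (b+1) = qpC q q b * (1 - q * q^b) := qp_succ _ _ _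
      have h1 : qpC q q a ≠ 0 := hq _ (by omega)
      have h2 : qpC q q b ≠ 0 := hq _ (by omega)
      have h3 : (1 - q * q^a) ≠ 0 := qp_factor_ne (hq (a+1) (by omega)) (by omega)
      have h4 : (1 - q * q^b) ≠ 0 := qp_factor_ne (hq (b+1) (by omega)) (by omega)
      rw [pa, pb, qa, qb]
      have h3' : 1 - q^a*q ≠ 0 := by rwa [mul_comm]
      field_simp
      ring
    · have hk3 : k = n + 2 := by omega
      subst hk3
      rw [if_neg (show ¬ (n+2 < n+2) by omega), if_pos (show 1 ≤ n+2 by omega),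
        if_neg (show ¬((1 ≤ n+2) ∧ (n+2 ≤ n+1)) by omega), zero_add, add_zero]
      simp only [hd, he, hc]
      rw [show n + 2 - 1 = n+1 from by omega,
          show n + 1 - (n+1) = 0 from by omega,
          show n + 2 - (n+2) = 0 from by omega]
      simp only [qp_zero, mul_one]
      have p1 : qpC β q (n+2) = qpC β q (n+1) * (1 - β * q^(n+1)) := qp_succ _ _ _
      have p2 : qpC q q (n+2) = qpC q q (n+1) * (1 - q * q^(n+1)) := qp_succ _ _ _
      have h1 : qpC q q (n+1) ≠ 0 := hq _ (by omega)
      have h2 : (1 - q * q^(n+1)) ≠ 0 := qp_factor_ne (hq (n+2) le_rfl) (by omega)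
      rw [p1, p2, show (1:ℂ) - q^(n+2) = 1 - q * q^(n+1) by rw [← pow_succ']]
      have h2' : 1 - q^(n+1)*q ≠ 0 := by rwa [mul_comm]
      field_simp

lemma Cq_zero (q β z : ℂ) : Cq q β z 0 = 1 := by
  rw [Cq, Finset.sum_range_one]
  simp [qp_zero]

lemma Cq_one (q β z : ℂ) : Cq q β z 1 = (1-β)/(1-q) * (z + z⁻¹) := by
  rw [Cq, Finset.sum_range_succ, Finset.sum_range_one]
  norm_num [qp_zero, qp_one]
  ring

lemma one_sub_q_ne {q : ℂ} {K : ℕ} (hq : ∀ k, k ≤ K → qpC q q k ≠ 0)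
    {s : ℕ} (h1 : 1 ≤ s) (h2 : s ≤ K) : 1 - q ^ s ≠ 0 := by
  have := qp_factor_ne (hq s h2) (j := s - 1) (by omega)
  have e : q * q ^ (s-1) = q ^ s := by
    rw [← pow_succ']; congr 1; omega
  rwa [e] at this

lemma one_sub_bq_ne {q β : ℂ} {K : ℕ} (hβ : (1:ℂ) - β ≠ 0)
    (hβq : ∀ k, k ≤ K → qpC (β * q) q k ≠ 0)
    {s : ℕ} (h2 : s ≤ K) : 1 - β * q ^ s ≠ 0 := by
  rcases Nat.eq_zero_or_pos s with rfl | hs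
  · simpa using hβ
  · have := qp_factor_ne (hβq s h2) (j := s - 1) (by omega)
    have e : β * q * q ^ (s-1) = β * q ^ s := by
      rw [mul_assoc, ← pow_succ']; congr 2; omega
    rwa [e] at this

lemma one_sub_b2_ne {q β : ℂ} {K : ℕ}
    (hβ2 : ∀ k, k ≤ K → qpC (β ^ 2) q k ≠ 0)
    {s : ℕ} (h2 : s + 1 ≤ K) : 1 - β ^ 2 * q ^ s ≠ 0 :=
  qp_factor_ne (hβ2 (s+1) h2) (by omega)

lemma key_lin (q β z : ℂ) (hz : z ≠ 0) :
    ∀ m : ℕ, ∀ n : ℕ, m ≤ n →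
    (∀ k, k ≤ m + n → qpC q q k ≠ 0) → ((1:ℂ) - β ≠ 0) →
    (∀ k, k ≤ m + n → qpC (β^2) q k ≠ 0) →
    (∀ k, k ≤ m + n → qpC (β*q) q k ≠ 0) →
    Cq q β z m * Cq q β z n
      = ∑ k ∈ Finset.range (m+1), Ac q β m n k * Cq q β z (m + n - 2*k) := by
  intro m
  induction m using Nat.strong_induction_on with
  | _ m IH =>
  obtain _ | (_ | μ) := m
  · -- m = 0
    intro n _ hq hw hβ2 hβq
    rw [show (0+1 : ℕ) = 1 from rfl, Finset.sum_range_one, Cq_zero, one_mul,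
        show 0+n-2*0 = n from by omega,
        Ac_zero q β n hw (hq n (by omega)) (hβ2 n (by omega)) (hβq n (by omega)),
        one_mul]
  · -- m = 1
    intro n h1n hq hw hβ2 hβq
    obtain ⟨p, rfl⟩ : ∃ p, n = p+1 := ⟨n-1, by omega⟩
    rw [show (1+1 : ℕ) = 2 from rfl, Finset.sum_range_succ, Finset.sum_range_one]
    rw [show 1+(p+1)-2*0 = p+2 from by omega, show 1+(p+1)-2*1 = p from by omega]
    have hbq : 1 - β*q^(p+1) ≠ 0 := one_sub_bq_ne hw hβq (by omega)
    have h1q : (1:ℂ) - q ≠ 0 := by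
      have := one_sub_q_ne hq (s := 1) (by omega) (by omega)
      simpa using this
    have hrec := Cq_rec q β z hz p (fun k hk => hq k (by omega))
    have h2 : (z+z⁻¹) * Cq q β z (p+1) = (1 - β*q^(p+1))⁻¹ *
        ((1 - q^(p+2)) * Cq q β z (p+2) + (1 - β^2*q^p) * Cq q β z p) := by
      rw [← hrec, inv_mul_cancel_left₀ hbq]
    rw [Cq_one,
      base1a q β p hw h1q (hβ2 (p+1) (by omega))
        (one_sub_b2_ne hβ2 (by omega)) (hq (p+1) (by omega))
        (qp_factor_ne (hq (p+2) (by omega)) (by omega))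
        (hβq (p+1) (by omega))
        (qp_factor_ne (hβq (p+2) (by omega)) (by omega)) hbq,
      base1b q β p hw h1q (hβ2 p (by omega))
        (one_sub_b2_ne hβ2 (by omega)) (hq p (by omega))
        (qp_factor_ne (hβq (p+1) (by omega)) (by omega))
        (hβq p (by omega)) hbq,
      mul_assoc, h2]
    field_simp
    ring
  · -- m = μ+2
    intro n hmn hq hw hβ2 hβq
    obtain ⟨e, rfl⟩ : ∃ e, n = μ+e+2 := ⟨n-μ-2, by omega⟩
    have hL : (1:ℂ) - q^(μ+2) ≠ 0 := one_sub_q_ne hq (by omega) (by omega)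
    have IH1 := IH (μ+1) (by omega) (μ+e+2) (by omega)
      (fun k hk => hq k (by omega)) hw (fun k hk => hβ2 k (by omega))
      (fun k hk => hβq k (by omega))
    have IH0 := IH μ (by omega) (μ+e+2) (by omega)
      (fun k hk => hq k (by omega)) hw (fun k hk => hβ2 k (by omega))
      (fun k hk => hβq k (by omega))
    have hrec := Cq_rec q β z hz μ (fun k hk => hq k (by omega))
    have main : (1 - q^(μ+2)) * (Cq q β z (μ+2) * Cq q β z (μ+e+2))
        = (1 - β*q^(μ+1)) * ((z+z⁻¹) * (Cq q β z (μ+1) * Cq q β z (μ+e+2)))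
          - (1 - β^2*q^μ) * (Cq q β z μ * Cq q β z (μ+e+2)) := by
      linear_combination (-(Cq q β z (μ+e+2))) * hrec
    refine mul_left_cancel₀ hL ?_
    rw [main, IH1, IH0]
    -- per-k inversion of the recurrence
    have T2 : ∀ k ∈ Finset.range (μ+2), (z+z⁻¹) * Cq q β z (μ+1+(μ+e+2)-2*k)
        = (1 - β*q^(μ+1+(μ+e+2)-2*k))⁻¹ *
          ((1 - q^(μ+2+(μ+e+2)-2*k)) * Cq q β z (μ+2+(μ+e+2)-2*k)
           + (1 - β^2*q^(μ+(μ+e+2)-2*k)) * Cq q β z (μ+(μ+e+2)-2*k)) := by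
      intro k hk
      have hk' : k ≤ μ+1 := by
        have := Finset.mem_range.1 hk; omega
      have hrecp := Cq_rec q β z hz (μ+(μ+e+2)-2*k) (fun j hj => hq j (by omega))
      rw [show μ+(μ+e+2)-2*k+1 = μ+1+(μ+e+2)-2*k from by omega,
          show μ+(μ+e+2)-2*k+2 = μ+2+(μ+e+2)-2*k from by omega] at hrecp
      have hginv : 1 - β*q^(μ+1+(μ+e+2)-2*k) ≠ 0 := one_sub_bq_ne hw hβq (by omega)
      rw [← hrecp, inv_mul_cancel_left₀ hginv]
    have HA : (1 - β*q^(μ+1)) * ((z+z⁻¹) *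
          (∑ k ∈ Finset.range (μ+1+1), Ac q β (μ+1) (μ+e+2) k
            * Cq q β z (μ+1+(μ+e+2)-2*k)))
        = (∑ k ∈ Finset.range (μ+2), ((1 - β*q^(μ+1)) * Ac q β (μ+1) (μ+e+2) k
            * (1 - q^(μ+2+(μ+e+2)-2*k)) * (1 - β*q^(μ+1+(μ+e+2)-2*k))⁻¹)
            * Cq q β z (μ+2+(μ+e+2)-2*k))
        + (∑ k ∈ Finset.range (μ+2), ((1 - β*q^(μ+1)) * Ac q β (μ+1) (μ+e+2) k
            * (1 - β^2*q^(μ+(μ+e+2)-2*k)) * (1 - β*q^(μ+1+(μ+e+2)-2*k))⁻¹)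
            * Cq q β z (μ+(μ+e+2)-2*k)) := by
      rw [show μ+1+1 = μ+2 from rfl, Finset.mul_sum, Finset.mul_sum,
        ← Finset.sum_add_distrib]
      refine Finset.sum_congr rfl fun k hk => ?_
      linear_combination ((1 - β*q^(μ+1)) * Ac q β (μ+1) (μ+e+2) k) * (T2 k hk)
    rw [HA]
    have HB : (1 - β^2*q^μ) * (∑ k ∈ Finset.range (μ+1), Ac q β μ (μ+e+2) k
          * Cq q β z (μ+(μ+e+2)-2*k))
        = ∑ k ∈ Finset.range (μ+1), ((1 - β^2*q^μ) * Ac q β μ (μ+e+2) k)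
            * Cq q β z (μ+(μ+e+2)-2*k) := by
      rw [Finset.mul_sum]
      refine Finset.sum_congr rfl fun k hk => by ring
    rw [HB]
    have RT : (1 - q^(μ+2)) * (∑ k ∈ Finset.range (μ+2+1), Ac q β (μ+2) (μ+e+2) k
          * Cq q β z (μ+2+(μ+e+2)-2*k))
        = ∑ k ∈ Finset.range (μ+3), ((1 - q^(μ+2)) * Ac q β (μ+2) (μ+e+2) k)
            * Cq q β z (μ+2+(μ+e+2)-2*k) := by
      rw [show μ+2+1 = μ+3 from rfl, Finset.mul_sum]
      exact Finset.sum_congr rfl fun k hk => by ring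
    rw [RT]
    have RA : (∑ k ∈ Finset.range (μ+2), ((1 - β*q^(μ+1)) * Ac q β (μ+1) (μ+e+2) k
            * (1 - q^(μ+2+(μ+e+2)-2*k)) * (1 - β*q^(μ+1+(μ+e+2)-2*k))⁻¹)
            * Cq q β z (μ+2+(μ+e+2)-2*k))
        = ∑ k ∈ Finset.range (μ+3), (if k < μ+2 then
            (1 - β*q^(μ+1)) * Ac q β (μ+1) (μ+e+2) k
            * (1 - q^(μ+2+(μ+e+2)-2*k)) * (1 - β*q^(μ+1+(μ+e+2)-2*k))⁻¹ else 0)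
            * Cq q β z (μ+2+(μ+e+2)-2*k) := by
      conv_rhs => rw [Finset.sum_range_succ]
      rw [if_neg (lt_irrefl _), zero_mul, add_zero]
      exact Finset.sum_congr rfl fun k hk => by rw [if_pos (Finset.mem_range.1 hk)]
    have RB : (∑ k ∈ Finset.range (μ+2), ((1 - β*q^(μ+1)) * Ac q β (μ+1) (μ+e+2) k
            * (1 - β^2*q^(μ+(μ+e+2)-2*k)) * (1 - β*q^(μ+1+(μ+e+2)-2*k))⁻¹)
            * Cq q β z (μ+(μ+e+2)-2*k))
        = ∑ k ∈ Finset.range (μ+3), (if 1 ≤ k then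
            (1 - β*q^(μ+1)) * Ac q β (μ+1) (μ+e+2) (k-1)
            * (1 - β^2*q^(μ+(μ+e+2)-2*(k-1))) * (1 - β*q^(μ+1+(μ+e+2)-2*(k-1)))⁻¹ else 0)
            * Cq q β z (μ+2+(μ+e+2)-2*k) := by
      conv_rhs => rw [Finset.sum_range_succ']
      rw [if_neg (show ¬ (1:ℕ) ≤ 0 by omega), zero_mul, add_zero]
      refine Finset.sum_congr rfl fun k hk => ?_
      rw [if_pos (show 1 ≤ k+1 by omega), Nat.add_sub_cancel,
          show μ+(μ+e+2)-2*k = μ+2+(μ+e+2)-2*(k+1) from by omega]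
    have RC : (∑ k ∈ Finset.range (μ+1), ((1 - β^2*q^μ) * Ac q β μ (μ+e+2) k)
            * Cq q β z (μ+(μ+e+2)-2*k))
        = ∑ k ∈ Finset.range (μ+3), (if 1 ≤ k ∧ k ≤ μ+1 then
            (1 - β^2*q^μ) * Ac q β μ (μ+e+2) (k-1) else 0)
            * Cq q β z (μ+2+(μ+e+2)-2*k) := by
      conv_rhs => rw [Finset.sum_range_succ]
      rw [if_neg (show ¬((1 ≤ μ+2) ∧ (μ+2 ≤ μ+1)) by omega), zero_mul, add_zero]
      conv_rhs => rw [Finset.sum_range_succ']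
      rw [if_neg (show ¬((1 ≤ 0) ∧ ((0:ℕ) ≤ μ+1)) by omega), zero_mul, add_zero]
      refine Finset.sum_congr rfl fun k hk => ?_
      have hk' := Finset.mem_range.1 hk
      rw [if_pos (show (1 ≤ k+1) ∧ (k+1 ≤ μ+1) by omega), Nat.add_sub_cancel,
          show μ+(μ+e+2)-2*k = μ+2+(μ+e+2)-2*(k+1) from by omega]
    rw [RA, RB, RC, ← Finset.sum_add_distrib, ← Finset.sum_sub_distrib]
    refine Finset.sum_congr rfl fun k hk => ?_
    have hk' := Finset.mem_range.1 hk
    rw [← add_mul, ← sub_mul]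
    refine congrArg (· * Cq q β z (μ+2+(μ+e+2)-2*k)) ?_
    rcases Nat.eq_zero_or_pos k with rfl | hk1
    · rw [if_pos (show 0 < μ+2 by omega), if_neg (show ¬ (1:ℕ) ≤ 0 by omega),
          if_neg (show ¬((1 ≤ 0) ∧ ((0:ℕ) ≤ μ+1)) by omega), add_zero, sub_zero]
      rw [show μ+2+(μ+e+2)-2*0 = 2*μ+e+3+1 from by omega,
          show μ+1+(μ+e+2)-2*0 = 2*μ+e+3 from by omega,
          pow_succ' q (2*μ+e+3)]
      exact (step0 q β μ e hw (hβ2 (2*μ+e+3) (by omega))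
        (one_sub_b2_ne hβ2 (by omega)) (hq (μ+1) (by omega))
        (qp_factor_ne (hq (μ+2) (by omega)) (by omega)) (hq (μ+e+2) (by omega))
        (hβq (2*μ+e+3) (by omega))
        (qp_factor_ne (hβq (2*μ+e+4) (by omega)) (by omega))
        (one_sub_bq_ne hw hβq (by omega))).symm
    · have hk1' : 1 ≤ k := hk1
      rcases Nat.lt_or_ge k (μ+2) with hk2 | hk2
      · -- middle case
        rw [if_pos hk2, if_pos hk1', if_pos (show (1 ≤ k) ∧ (k ≤ μ+1) by omega)]
        obtain ⟨a, b, rfl, rfl⟩ : ∃ a b, k = a+1 ∧ μ = a+b :=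
          ⟨k-1, μ+1-k, by omega, by omega⟩
        rw [show a+1-1 = a from by omega,
            show (1:ℂ) - q^(a+b+2+(a+b+e+2)-2*(a+1)) = 1 - q*q^(2*b+e+1) from by
              rw [show a+b+2+(a+b+e+2)-2*(a+1) = 2*b+e+1+1 from by omega, pow_succ'],
            show a+b+1+(a+b+e+2)-2*(a+1) = 2*b+e+1 from by omega,
            show a+b+(a+b+e+2)-2*a = 2*b+e+2 from by omega,
            show a+b+1+(a+b+e+2)-2*a = 2*b+e+3 from by omega]
        exact (step_mid q β a b e
          (hβ2 (2*b+e) (by omega)) (hq b (by omega)) (hq (b+e) (by omega))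
          (hq a (by omega)) (hβq (a+2*b+e) (by omega)) hw
          (qp_factor_ne (hβ2 (2*b+e+1) (by omega)) (by omega))
          (qp_factor_ne (hβ2 (2*b+e+2) (by omega)) (by omega))
          (qp_factor_ne (hβ2 (2*b+e+3) (by omega)) (by omega))
          (qp_factor_ne (hq (b+1) (by omega)) (by omega))
          (qp_factor_ne (hq (b+e+1) (by omega)) (by omega))
          (qp_factor_ne (hq (b+e+2) (by omega)) (by omega))
          (qp_factor_ne (hq (a+1) (by omega)) (by omega))
          (qp_factor_ne (hβq (a+2*b+e+1) (by omega)) (by omega))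
          (qp_factor_ne (hβq (a+2*b+e+2) (by omega)) (by omega))
          (qp_factor_ne (hβq (a+2*b+e+3) (by omega)) (by omega))
          (one_sub_bq_ne hw hβq (by omega))
          (one_sub_bq_ne hw hβq (by omega))).symm
      · have hk3 : k = μ + 2 := by omega
        subst hk3
        rw [if_neg (show ¬ (μ+2 < μ+2) by omega), if_pos (show 1 ≤ μ+2 by omega),
            if_neg (show ¬((1 ≤ μ+2) ∧ (μ+2 ≤ μ+1)) by omega), zero_add, sub_zero]
        rw [show μ+2-1 = μ+1 from by omega,
            show μ+(μ+e+2)-2*(μ+1) = e from by omega,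
            show μ+1+(μ+e+2)-2*(μ+1) = e+1 from by omega]
        exact (steptop q β μ e hw (hβ2 e (by omega))
          (one_sub_b2_ne hβ2 (by omega)) (hq e (by omega))
          (qp_factor_ne (hq (e+1) (by omega)) (by omega))
          (hq (μ+1) (by omega))
          (qp_factor_ne (hq (μ+2) (by omega)) (by omega))
          (hβq (μ+e+2) (by omega))
          (one_sub_bq_ne hw hβq (by omega))).symm

/-- Rogers' linearization formula for the continuous
`q`-ultraspherical polynomials. -/
theorem stmt18 (q β z : ℂ) (m n : ℕ) (hz : z ≠ 0)
    (hq : ∀ k, k ≤ m + n → qpC q q k ≠ 0)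
    (hβ : (1 : ℂ) - β ≠ 0)
    (hβ2 : ∀ k, k ≤ m + n → qpC (β ^ 2) q k ≠ 0)
    (hβq : ∀ k, k ≤ m + n → qpC (β * q) q k ≠ 0) :
    Cq q β z m * Cq q β z n =
      ∑ k ∈ Finset.range (min m n + 1),
        qpC q q (m + n - 2 * k) * qpC β q (m - k) * qpC β q (n - k) * qpC β q k *
            qpC (β ^ 2) q (m + n - k) /
          (qpC (β ^ 2) q (m + n - 2 * k) * qpC q q (m - k) * qpC q q (n - k) *
            qpC q q k * qpC (β * q) q (m + n - k)) *
          ((1 - β * q ^ (m + n - 2 * k)) / (1 - β)) * Cq q β z (m + n - 2 * k) := by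
  rcases le_total m n with hmn | hnm
  · rw [min_eq_left hmn]
    exact key_lin q β z hz m n hmn hq hβ hβ2 hβq
  · have h := key_lin q β z hz n m hnm (fun k hk => hq k (by omega)) hβ
      (fun k hk => hβ2 k (by omega)) (fun k hk => hβq k (by omega))
    rw [min_eq_right hnm, mul_comm (Cq q β z m), h]
    refine Finset.sum_congr rfl fun k hk => ?_
    simp only [Ac]
    have hc : n + m = m + n := Nat.add_comm n m
    rw [hc]
    ring
end
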